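/- arXiv:2104.01739 — 3 statements merged into one kernel-verified Lean document; each statement's English description precedes it below -/
import Mathlib

section
/- If G is a connected finite simple graph with in_t(G) ≤ 2, then G is a path, i.e., G is acyclic and has maximum degree at most 2. -/
open SimpleGraph


namespace Inspection

variable {V : Type*} {W : Type*}

/-- The boundary of a vertex set `X`: vertices of `X` having a neighbor outside `X`. -/
def boundary (G : SimpleGraph V) (X : Set V) : Set V :=
  {v | v ∈ X ∧ ∃ w, w ∉ X ∧ G.Adj v w}

/-- The set of neighbors of a vertex set `X`. -/
def nbrSet (G : SimpleGraph V) (X : Set V) : Set V :=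
  {v | ∃ u ∈ X, G.Adj u v}

/-- The fully cleared sets of a search `S` (indexed so that turn `t ≥ 1` inspects `S t`):
`FC 0 = ∅`, and `FC (t+1) = PC (t+1) \ ∂(PC (t+1))` where `PC (t+1) = FC t ∪ S (t+1)`. -/
def FC (G : SimpleGraph V) (S : ℕ → Set V) : ℕ → Set V
  | 0 => ∅
  | t + 1 => (FC G S t ∪ S (t + 1)) \ boundary G (FC G S t ∪ S (t + 1))

/-- There is a successful `k`-search on `G`: a finite sequence `S 1, ..., S ℓ` of sets of
size at most `k` whose final fully cleared set is all of `V`. -/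
def SuccessfulSearch (G : SimpleGraph V) (k : ℕ) : Prop :=
  ∃ (ℓ : ℕ) (S : ℕ → Set V),
    (∀ t, 1 ≤ t → t ≤ ℓ → (S t).ncard ≤ k) ∧ FC G S ℓ = Set.univ

/-- The inspection number of `G`: the least `k` admitting a successful `k`-search. -/
noncomputable def inspectionNumber (G : SimpleGraph V) : ℕ :=
  sInf {k | SuccessfulSearch G k}

/-- There is a successful monotonic `k`-search on `G`. -/
def SuccessfulMonotonicSearch (G : SimpleGraph V) (k : ℕ) : Prop :=
  ∃ (ℓ : ℕ) (S : ℕ → Set V),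
    (∀ t, 1 ≤ t → t ≤ ℓ → (S t).ncard ≤ k) ∧
    (∀ i j, i ≤ j → j ≤ ℓ → FC G S i ⊆ FC G S j) ∧
    FC G S ℓ = Set.univ

/-- The monotonic inspection number of `G`. -/
noncomputable def monoInspectionNumber (G : SimpleGraph V) : ℕ :=
  sInf {k | SuccessfulMonotonicSearch G k}

/-- A path decomposition `X 1, ..., X ℓ` of `G`: every edge is contained in some bag, and
for `i ≤ j ≤ k` we have `X i ∩ X k ⊆ X j`. -/
def IsPathDecomp (G : SimpleGraph V) (ℓ : ℕ) (X : ℕ → Set V) : Prop :=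
  (∀ u v : V, G.Adj u v → ∃ i, 1 ≤ i ∧ i ≤ ℓ ∧ u ∈ X i ∧ v ∈ X i) ∧
  (∀ i j k, 1 ≤ i → i ≤ j → j ≤ k → k ≤ ℓ → X i ∩ X k ⊆ X j)

/-- The pathwidth of `G`: the least `w` such that `G` has a path decomposition all of whose
bags have size at most `w + 1`. -/
noncomputable def pathwidth (G : SimpleGraph V) : ℕ :=
  sInf {w | ∃ (ℓ : ℕ) (X : ℕ → Set V), IsPathDecomp G ℓ X ∧
    ∀ i, 1 ≤ i → i ≤ ℓ → (X i).ncard ≤ w + 1}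

/-- Witness data exhibiting `H` as a subdivision of `G`: an injection `f` of the vertices of
`G` into those of `H` and, for each edge of `G`, a path of `H` between the images of its
endpoints, these paths being internally disjoint from each other and from the image of `f`,
and jointly covering all vertices and edges of `H`. -/
structure SubdivisionData (G : SimpleGraph V) (H : SimpleGraph W) where
  f : V → W
  inj : Function.Injective f
  walk : ∀ {u v : V}, G.Adj u v → H.Walk (f u) (f v)
  isPath : ∀ {u v : V} (h : G.Adj u v), (walk h).IsPath
  symm : ∀ {u v : V} (h : G.Adj u v), walk h.symm = (walk h).reverse
  disj : ∀ {u v x y : V} (h₁ : G.Adj u v) (h₂ : G.Adj x y), s(u, v) ≠ s(x, y) →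
      ∀ w : W, w ∈ (walk h₁).support → w ∈ (walk h₂).support → w ∈ Set.range f
  branch : ∀ {u v : V} (h : G.Adj u v) (w : W),
      w ∈ (walk h).support → w ∈ Set.range f → w = f u ∨ w = f v
  cover_vert : ∀ w : W, w ∈ Set.range f ∨ ∃ (u v : V) (h : G.Adj u v), w ∈ (walk h).support
  cover_edge : ∀ e ∈ H.edgeSet, ∃ (u v : V) (h : G.Adj u v), e ∈ (walk h).edges

/-- `H` is a subdivision of `G`. -/
def IsSubdivision (G : SimpleGraph V) (H : SimpleGraph W) : Prop :=
  Nonempty (SubdivisionData G H)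

/-- The topological inspection number of `G`: the least `k` such that every subdivision of
`G` has a further subdivision with inspection number at most `k`. -/
noncomputable def topInspectionNumber (G : SimpleGraph V) : ℕ :=
  sInf {k | ∀ (W' : Type) (H : SimpleGraph W'), IsSubdivision G H →
    ∃ (W'' : Type) (H' : SimpleGraph W''), IsSubdivision H H' ∧ inspectionNumber H' ≤ k}



-- ###### auxiliary development ######
-- ## basic machinery
def clean (G : SimpleGraph V) (X : Set V) : Set V :=
  {v | v ∈ X ∧ ∀ w, G.Adj v w → w ∈ X}

lemma diff_boundary (G : SimpleGraph V) (X : Set V) : X \ boundary G X = clean G X := by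
  ext v
  constructor
  · rintro ⟨hv, hnb⟩
    refine ⟨hv, fun w hadj => ?_⟩
    by_contra hwX
    exact hnb ⟨hv, w, hwX, hadj⟩
  · rintro ⟨hv, h⟩
    exact ⟨hv, fun hb => hb.2.choose_spec.1 (h _ hb.2.choose_spec.2)⟩

lemma clean_subset (G : SimpleGraph V) (X : Set V) : clean G X ⊆ X := fun _ h => h.1

lemma clean_univ (G : SimpleGraph V) : clean G Set.univ = Set.univ := by
  ext v; simp [clean]

lemma clean_empty (G : SimpleGraph V) : clean G (∅ : Set V) = ∅ := by
  ext v; simp [clean]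

def Reach (G : SimpleGraph V) (k : ℕ) (A : Set V) : Prop :=
  ∃ (ℓ : ℕ) (S : ℕ → Set V),
    (∀ t, 1 ≤ t → t ≤ ℓ → (S t).ncard ≤ k) ∧ FC G S ℓ = A

lemma FC_congr (G : SimpleGraph V) {S S' : ℕ → Set V} :
    ∀ {ℓ : ℕ}, (∀ t, 1 ≤ t → t ≤ ℓ → S t = S' t) → FC G S ℓ = FC G S' ℓ
  | 0, _ => rfl
  | ℓ + 1, h => by
      have ih := FC_congr G (S := S) (S' := S') (ℓ := ℓ)
        (fun t h1 h2 => h t h1 (h2.trans (Nat.le_succ ℓ)))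
      simp only [FC, ih, h (ℓ + 1) (Nat.succ_le_succ (Nat.zero_le ℓ)) le_rfl]

lemma reach_empty (G : SimpleGraph V) (k : ℕ) : Reach G k (∅ : Set V) :=
  ⟨0, fun _ => ∅, fun t h1 h2 => absurd (h1.trans h2) (by omega), rfl⟩

lemma reach_step {G : SimpleGraph V} {k : ℕ} {A : Set V} (h : Reach G k A)
    (T : Set V) (hT : T.ncard ≤ k) :
    Reach G k ((A ∪ T) \ boundary G (A ∪ T)) := by
  obtain ⟨ℓ, S, hb, hfc⟩ := h
  refine ⟨ℓ + 1, fun t => if t = ℓ + 1 then T else S t, fun t h1 h2 => ?_, ?_⟩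
  · by_cases ht : t = ℓ + 1
    · simpa [ht] using hT
    · simpa [ht] using hb t h1 (by omega)
  · have hcon : FC G (fun t => if t = ℓ + 1 then T else S t) ℓ = FC G S ℓ :=
      FC_congr G (fun t _ h2 => by simp [Nat.ne_of_lt (Nat.lt_succ_of_le h2)])
    simp [FC, hcon, hfc]

lemma reach_clean_step {G : SimpleGraph V} {k : ℕ} {X : Set V}
    (h : Reach G k (clean G X)) (T : Set V) (hXT : X ⊆ clean G X ∪ T)
    (hT : T.ncard ≤ k) : Reach G k (clean G (X ∪ T)) := by
  have he : clean G X ∪ T = X ∪ T :=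
    Set.Subset.antisymm (Set.union_subset_union_left T (clean_subset G X))
      (Set.union_subset (hXT.trans (by rfl)) Set.subset_union_right)
  have := reach_step h T hT
  rwa [he, diff_boundary] at this

lemma successful_of_reach_univ {G : SimpleGraph V} {k : ℕ}
    (h : Reach G k (Set.univ : Set V)) : SuccessfulSearch G k := h

lemma successful_univ (G : SimpleGraph V) :
    SuccessfulSearch G ((Set.univ : Set V)).ncard := by
  refine ⟨1, fun _ => Set.univ, fun t _ _ => le_rfl, ?_⟩
  have : boundary G (Set.univ : Set V) = ∅ := by
    ext v; simp [boundary]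
  simp [FC, this]

lemma exists_successful_inspectionNumber (G : SimpleGraph V) :
    SuccessfulSearch G (inspectionNumber G) :=
  by have := Nat.sInf_mem (s := {k | SuccessfulSearch G k}) ⟨_, successful_univ G⟩; exact this



lemma getVert_mem_support {G : SimpleGraph V} {u v : V} (p : G.Walk u v) {n : ℕ}
    (hn : n ≤ p.length) : p.getVert n ∈ p.support :=
  SimpleGraph.Walk.mem_support_iff_exists_getVert.mpr ⟨n, rfl, hn⟩

lemma edges_index {G : SimpleGraph V} {u v : V} (p : G.Walk u v) {e : Sym2 V}
    (he : e ∈ p.edges) : ∃ j, j < p.length ∧ e = s(p.getVert j, p.getVert (j + 1)) := by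
  induction p with
  | nil => simp at he
  | cons h q ih =>
    rw [SimpleGraph.Walk.edges_cons, List.mem_cons] at he
    rcases he with he | he
    · exact ⟨0, by simp [SimpleGraph.Walk.length_cons], by
        simpa [SimpleGraph.Walk.getVert_zero, SimpleGraph.Walk.getVert_cons_succ] using he⟩
    · obtain ⟨j, hj, hje⟩ := ih he
      exact ⟨j + 1, by simp [SimpleGraph.Walk.length_cons]; omega, by
        simpa [SimpleGraph.Walk.getVert_cons_succ] using hje⟩

lemma getVert_inj_of_isPath {G : SimpleGraph V} {u v : V} {p : G.Walk u v}
    (hp : p.IsPath) : ∀ {i j : ℕ}, i ≤ p.length → j ≤ p.length →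
      p.getVert i = p.getVert j → i = j := by
  induction p with
  | nil => intro i j hi hj _; simp only [SimpleGraph.Walk.length_nil] at hi hj; omega
  | @cons x y z hxy q ih =>
    rw [SimpleGraph.Walk.cons_isPath_iff] at hp
    intro i j hi hj hij
    rw [SimpleGraph.Walk.length_cons] at hi hj
    match i, j with
    | 0, 0 => rfl
    | 0, j' + 1 =>
      exfalso
      rw [SimpleGraph.Walk.getVert_zero, SimpleGraph.Walk.getVert_cons_succ] at hij
      exact hp.2 (hij ▸ getVert_mem_support q (by omega))
    | i' + 1, 0 =>
      exfalso
      rw [SimpleGraph.Walk.getVert_zero, SimpleGraph.Walk.getVert_cons_succ] at hij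
      exact hp.2 (hij ▸ getVert_mem_support q (by omega))
    | i' + 1, j' + 1 =>
      rw [SimpleGraph.Walk.getVert_cons_succ, SimpleGraph.Walk.getVert_cons_succ] at hij
      have := ih hp.1 (by omega) (by omega) hij
      omega

/-- An interior vertex of a path has two distinct neighbors on the path. -/
lemma interior_two_nbrs {G : SimpleGraph V} {a b : V} (p : G.Walk a b) (hp : p.IsPath)
    {w : V} (hw : w ∈ p.support) (hwa : w ≠ a) (hwb : w ≠ b) :
    ∃ s t, s ≠ t ∧ G.Adj w s ∧ G.Adj w t ∧ s ∈ p.support ∧ t ∈ p.support := by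
  induction p with
  | nil => simp at hw; exact absurd hw hwa
  | @cons x y z hxy q ih =>
    rw [SimpleGraph.Walk.support_cons, List.mem_cons] at hw
    rcases hw with hw | hw
    · exact absurd hw hwa
    rw [SimpleGraph.Walk.cons_isPath_iff] at hp
    by_cases hwy : w = y
    · subst hwy
      have hnil : ¬ q.Nil := SimpleGraph.Walk.not_nil_of_ne hwb
      have hlen : 0 < q.length := by
        rcases Nat.eq_zero_or_pos q.length with h0 | h0
        · exact absurd (SimpleGraph.Walk.nil_iff_length_eq.mpr h0) hnil
        · exact h0
      refine ⟨x, q.getVert 1, ?_, hxy.symm, ?_, ?_, ?_⟩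
      · intro hc
        exact hp.2 (hc ▸ getVert_mem_support q (by omega))
      · have := q.adj_getVert_succ (i := 0) hlen
        rwa [SimpleGraph.Walk.getVert_zero] at this
      · simp [SimpleGraph.Walk.support_cons]
      · rw [SimpleGraph.Walk.support_cons]
        exact List.mem_cons_of_mem _ (getVert_mem_support q (by omega))
    · obtain ⟨s, t, hst, hs, ht, hsm, htm⟩ := ih hp.1 hw hwy hwb
      exact ⟨s, t, hst, hs, ht, by simp [SimpleGraph.Walk.support_cons, hsm],
        by simp [SimpleGraph.Walk.support_cons, htm]⟩



lemma three_le_ncard {S : Set V} (hfin : S.Finite) {a b c : V}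
    (ha : a ∈ S) (hb : b ∈ S) (hc : c ∈ S)
    (hab : a ≠ b) (hac : a ≠ c) (hbc : b ≠ c) : 3 ≤ S.ncard := by
  have hsub : ({a, b, c} : Set V) ⊆ S := by
    intro x hx; rcases hx with rfl | rfl | rfl
    · exact ha
    · exact hb
    · exact hc
  have h3 : ({a, b, c} : Set V).ncard = 3 :=
    Set.ncard_eq_three.mpr ⟨a, b, c, hab, hac, hbc, rfl⟩
  calc 3 = ({a, b, c} : Set V).ncard := h3.symm
    _ ≤ S.ncard := Set.ncard_le_ncard hsub hfin

lemma mem_FC_succ {G : SimpleGraph V} {S : ℕ → Set V} {t : ℕ} {w : V}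
    (h : w ∈ FC G S (t + 1)) :
    w ∈ FC G S t ∪ S (t + 1) ∧ ∀ w', G.Adj w w' → w' ∈ FC G S t ∪ S (t + 1) := by
  obtain ⟨hw, hnb⟩ := h
  refine ⟨hw, fun w' hadj => ?_⟩
  by_contra hw'
  exact hnb ⟨hw, w', hw', hadj⟩

/-- No successful `k`-search, `k ≤ 2`, on a graph containing a nonempty set in which
every vertex has two distinct neighbors. -/
lemma no_two_search_of_cycleset {G : SimpleGraph V}
    (hfin : (Set.univ : Set V).Finite) (C : Set V) (hne : C.Nonempty)
    (h2 : ∀ w ∈ C, ∃ a b, a ≠ b ∧ G.Adj w a ∧ G.Adj w b ∧ a ∈ C ∧ b ∈ C)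
    {k : ℕ} (hk : k ≤ 2) : ¬ SuccessfulSearch G k := by
  rintro ⟨ℓ, S, hb, hfc⟩
  have key : ∀ t, t ≤ ℓ → FC G S t ∩ C = ∅ := by
    intro t
    induction t with
    | zero => intro _; simp [FC]
    | succ t ih =>
      intro ht
      have iht := ih (by omega)
      ext w
      simp only [Set.mem_inter_iff, Set.mem_empty_iff_false, iff_false, not_and]
      intro hwFC hwC
      obtain ⟨hw, hnb⟩ := mem_FC_succ hwFC
      obtain ⟨a, b, hab, hwa, hwb, haC, hbC⟩ := h2 w hwC
      have hemp : ∀ z, z ∈ C → z ∉ FC G S t := by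
        intro z hzC hzF
        have : z ∈ FC G S t ∩ C := ⟨hzF, hzC⟩
        rw [iht] at this
        exact this
      have hwS : w ∈ S (t + 1) := hw.resolve_left (hemp w hwC)
      have haS : a ∈ S (t + 1) := (hnb a hwa).resolve_left (hemp a haC)
      have hbS : b ∈ S (t + 1) := (hnb b hwb).resolve_left (hemp b hbC)
      have : 3 ≤ (S (t + 1)).ncard :=
        three_le_ncard (hfin.subset (Set.subset_univ _)) hwS haS hbS
          hwa.ne hwb.ne hab
      have := hb (t + 1) (by omega) (by omega)
      omega
  obtain ⟨w, hw⟩ := hne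
  have : w ∈ FC G S ℓ ∩ C := by rw [hfc]; exact ⟨trivial, hw⟩
  rw [key ℓ le_rfl] at this
  exact this

/-- No successful `k`-search, `k ≤ 2`, on a graph containing a "spider" configuration. -/
lemma no_two_search_of_spider {G : SimpleGraph V}
    (hfin : (Set.univ : Set V).Finite) (v : V) (x y : Fin 3 → V)
    (hvx : ∀ i, G.Adj v (x i)) (hxy : ∀ i, G.Adj (x i) (y i))
    (hxinj : Function.Injective x) (hvy : ∀ i, v ≠ y i)
    {k : ℕ} (hk : k ≤ 2) : ¬ SuccessfulSearch G k := by
  rintro ⟨ℓ, S, hb, hfc⟩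
  have card3 : ∀ t (a b c : V), 1 ≤ t → t ≤ ℓ → a ∈ S t → b ∈ S t → c ∈ S t →
      a ≠ b → a ≠ c → b ≠ c → False := by
    intro t a b c h1 h2 ha hb' hc hab hac hbc
    have := three_le_ncard (hfin.subset (Set.subset_univ _)) ha hb' hc hab hac hbc
    have := hb t h1 h2
    omega
  have key : ∀ t, t ≤ ℓ →
      v ∉ FC G S t ∧ ∀ i j, i ≠ j → x i ∈ FC G S t → x j ∉ FC G S t ∧ y j ∉ FC G S t := by
    intro t
    induction t with
    | zero => intro _; exact ⟨fun h => h, fun i j _ h => h.elim⟩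
    | succ t ih =>
      intro ht
      obtain ⟨ihv, ihx⟩ := ih (by omega)
      constructor
      · intro hv
        obtain ⟨hvPC, hvnb⟩ := mem_FC_succ hv
        have hvS : v ∈ S (t + 1) := hvPC.resolve_left ihv
        have hxPC : ∀ i, x i ∈ FC G S t ∪ S (t + 1) := fun i => hvnb (x i) (hvx i)
        have : ∃ i j, i ≠ j ∧ x i ∈ S (t + 1) ∧ x j ∈ S (t + 1) := by
          by_cases h0 : x 0 ∈ FC G S t
          · exact ⟨1, 2, by decide, (hxPC 1).resolve_left (ihx 0 1 (by decide) h0).1,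
              (hxPC 2).resolve_left (ihx 0 2 (by decide) h0).1⟩
          · by_cases h1 : x 1 ∈ FC G S t
            · exact ⟨0, 2, by decide, (hxPC 0).resolve_left h0,
                (hxPC 2).resolve_left (ihx 1 2 (by decide) h1).1⟩
            · exact ⟨0, 1, by decide, (hxPC 0).resolve_left h0, (hxPC 1).resolve_left h1⟩
        obtain ⟨i, j, hij, hiS, hjS⟩ := this
        exact card3 (t+1) v (x i) (x j) (by omega) ht hvS hiS hjS
          (hvx i).ne (hvx j).ne (fun h => hij (hxinj h))
      · intro i j hij hxi
        obtain ⟨hxiPC, hxinb⟩ := mem_FC_succ hxi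
        have hvS : v ∈ S (t + 1) := (hxinb v (hvx i).symm).resolve_left ihv
        have hyiPC : y i ∈ FC G S t ∪ S (t + 1) := hxinb (y i) (hxy i)
        rcases hxiPC with hiA | hiS
        · -- x i ∈ FC t
          have hj' := ihx i j hij hiA
          constructor
          · intro hxj
            obtain ⟨hxjPC, hxjnb⟩ := mem_FC_succ hxj
            have hxjS : x j ∈ S (t + 1) := hxjPC.resolve_left hj'.1
            have hyjS : y j ∈ S (t + 1) := (hxjnb (y j) (hxy j)).resolve_left hj'.2
            exact card3 (t+1) v (x j) (y j) (by omega) ht hvS hxjS hyjS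
              (hvx j).ne (hvy j) (hxy j).ne
          · intro hyj
            obtain ⟨hyjPC, hyjnb⟩ := mem_FC_succ hyj
            have hyjS : y j ∈ S (t + 1) := hyjPC.resolve_left hj'.2
            have hxjS : x j ∈ S (t + 1) := (hyjnb (x j) (hxy j).symm).resolve_left hj'.1
            exact card3 (t+1) v (x j) (y j) (by omega) ht hvS hxjS hyjS
              (hvx j).ne (hvy j) (hxy j).ne
        · -- x i ∈ S (t+1)
          have hyiA : y i ∈ FC G S t := by
            rcases hyiPC with h | h
            · exact h
            · exact (card3 (t+1) v (x i) (y i) (by omega) ht hvS hiS h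
                (hvx i).ne (hvy i) (hxy i).ne).elim
          constructor
          · intro hxj
            obtain ⟨hxjPC, hxjnb⟩ := mem_FC_succ hxj
            rcases hxjPC with hjA | hjS
            · exact (ihx j i hij.symm hjA).2 hyiA
            · exact card3 (t+1) v (x i) (x j) (by omega) ht hvS hiS hjS
                (hvx i).ne (hvx j).ne (fun h => hij (hxinj h))
          · intro hyj
            obtain ⟨hyjPC, hyjnb⟩ := mem_FC_succ hyj
            have hxjPC : x j ∈ FC G S t ∪ S (t + 1) := hyjnb (x j) (hxy j).symm
            rcases hxjPC with hjA | hjS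
            · exact (ihx j i hij.symm hjA).2 hyiA
            · exact card3 (t+1) v (x i) (x j) (by omega) ht hvS hiS hjS
                (hvx i).ne (hvx j).ne (fun h => hij (hxinj h))
  have := (key ℓ le_rfl).1
  rw [hfc] at this
  exact this trivial




-- ## upper bound

/-- Any neighbor of a non-branch vertex on a subdivision walk is the previous or
next vertex of that walk. -/
lemma nbr_on_walk {G : SimpleGraph V} {K : SimpleGraph W} (D : SubdivisionData G K)
    {u v : V} (h : G.Adj u v) {r : ℕ} (hr : r ≤ (D.walk h).length)
    (hB : (D.walk h).getVert r ∉ Set.range D.f) {w' : W}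
    (hadj : K.Adj ((D.walk h).getVert r) w') :
    ∃ r', r' ≤ (D.walk h).length ∧ w' = (D.walk h).getVert r' ∧
      (r' = r + 1 ∨ r' + 1 = r) := by
  obtain ⟨a, b, hab, he⟩ := D.cover_edge _ (show s((D.walk h).getVert r, w') ∈ K.edgeSet from hadj)
  have hwmem : (D.walk h).getVert r ∈ (D.walk hab).support :=
    SimpleGraph.Walk.fst_mem_support_of_mem_edges _ he
  have hwp : (D.walk h).getVert r ∈ (D.walk h).support := getVert_mem_support _ hr
  have hsame : s(a, b) = s(u, v) := by
    by_contra hne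
    exact hB (D.disj hab h hne _ hwmem hwp)
  have hep : s((D.walk h).getVert r, w') ∈ (D.walk h).edges := by
    rw [Sym2.eq_iff] at hsame
    rcases hsame with ⟨rfl, rfl⟩ | ⟨rfl, rfl⟩
    · exact he
    · have hrev : D.walk hab = (D.walk h).reverse := D.symm h
      rw [hrev, SimpleGraph.Walk.edges_reverse, List.mem_reverse] at he
      exact he
  obtain ⟨j, hj, hje⟩ := edges_index _ hep
  rw [Sym2.eq_iff] at hje
  rcases hje with ⟨h1, h2⟩ | ⟨h1, h2⟩
  · have : r = j := getVert_inj_of_isPath (D.isPath h) hr (by omega) h1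
    exact ⟨j + 1, by omega, h2, Or.inl (by omega)⟩
  · have : r = j + 1 := getVert_inj_of_isPath (D.isPath h) hr (by omega) h1
    exact ⟨j, by omega, h2, Or.inr (by omega)⟩

lemma sweep {G : SimpleGraph V} {K : SimpleGraph W} (D : SubdivisionData G K)
    {k : ℕ} (hk : (Set.range D.f).ncard + 2 ≤ k)
    {u v : V} (h : G.Adj u v) {X : Set W}
    (hBX : Set.range D.f ⊆ X)
    (hXcl : ∀ w ∈ X, w ∉ Set.range D.f → ∀ w', K.Adj w w' → w' ∈ X)
    (hR : Reach K k (clean K X)) :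
    Reach K k (clean K (X ∪ {w | w ∈ (D.walk h).support})) := by
  set p := D.walk h with hp
  set pts : ℕ → Set W := fun i => {w | ∃ j, j ≤ i ∧ p.getVert j = w} with hpts
  have main : ∀ i, i ≤ p.length → Reach K k (clean K (X ∪ pts i)) := by
    intro i
    induction i with
    | zero =>
      intro _
      have : X ∪ pts 0 = X := by
        apply Set.union_eq_self_of_subset_right
        rintro w ⟨j, hj, hgv⟩
        have : j = 0 := by omega
        subst this
        rw [SimpleGraph.Walk.getVert_zero] at hgv
        exact hgv ▸ hBX ⟨u, rfl⟩
      rw [this]; exact hR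
    | succ i ih =>
      intro hi1
      have ihr := ih (by omega)
      set T : Set W := Set.range D.f ∪ {p.getVert i, p.getVert (i + 1)} with hT
      have hTcard : T.ncard ≤ k := by
        calc T.ncard ≤ (Set.range D.f).ncard + ({p.getVert i, p.getVert (i+1)} : Set W).ncard :=
              Set.ncard_union_le _ _
          _ ≤ (Set.range D.f).ncard + 2 := by
              have := Set.ncard_insert_le (p.getVert i) ({p.getVert (i+1)} : Set W)
              simp [Set.ncard_singleton] at this ⊢
              omega
          _ ≤ k := hk
      have hXT : X ∪ pts i ⊆ clean K (X ∪ pts i) ∪ T := by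
        intro w hw
        by_cases hwB : w ∈ Set.range D.f
        · exact Or.inr (Or.inl hwB)
        rcases hw with hwX | hwpts
        · exact Or.inl ⟨Or.inl hwX, fun w' hadj => Or.inl (hXcl w hwX hwB w' hadj)⟩
        · obtain ⟨r, hr, hgv⟩ := hwpts
          by_cases hwi : w = p.getVert i
          · exact Or.inr (Or.inr (Or.inl hwi))
          have hri : r < i := by
            rcases Nat.lt_or_ge r i with h' | h'
            · exact h'
            · exfalso; exact hwi (by rw [← hgv]; congr 1; omega)
          refine Or.inl ⟨Or.inr ⟨r, hr, hgv⟩, fun w' hadj => ?_⟩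
          subst hgv
          obtain ⟨r', hr', hw', hor⟩ := nbr_on_walk D h (by rw [← hp]; omega) hwB hadj
          rw [← hp] at hr' hw'
          exact Or.inr ⟨r', by omega, hw'.symm⟩
      have step := reach_clean_step ihr T hXT hTcard
      have heq : X ∪ pts i ∪ T = X ∪ pts (i + 1) := by
        apply Set.Subset.antisymm
        · intro w hw
          rcases hw with (hw | hw) | hw
          · exact Or.inl hw
          · obtain ⟨j, hj, hgv⟩ := hw
            exact Or.inr ⟨j, by omega, hgv⟩
          · rcases hw with hw | hw | hw
            · exact Or.inl (hBX hw)
            · exact Or.inr ⟨i, by omega, hw.symm⟩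
            · exact Or.inr ⟨i + 1, le_rfl, hw.symm⟩
        · intro w hw
          rcases hw with hw | hw
          · exact Or.inl (Or.inl hw)
          · obtain ⟨j, hj, hgv⟩ := hw
            rcases Nat.lt_or_ge j (i + 1) with h' | h'
            · exact Or.inl (Or.inr ⟨j, by omega, hgv⟩)
            · have : j = i + 1 := by omega
              subst this
              exact Or.inr (Or.inr (Or.inr hgv.symm))
      rw [heq] at step
      exact step
  have final := main p.length le_rfl
  have : X ∪ pts p.length = X ∪ {w | w ∈ p.support} := by
    congr 1
    ext w
    simp only [hpts, Set.mem_setOf_eq, SimpleGraph.Walk.mem_support_iff_exists_getVert]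
    constructor
    · rintro ⟨j, hj, hgv⟩; exact ⟨j, hgv, hj⟩
    · rintro ⟨j, hgv, hj⟩; exact ⟨j, hj, hgv⟩
  rwa [this] at final

lemma successful_of_subdivisionData [Fintype V] {G : SimpleGraph V} {K : SimpleGraph W}
    (D : SubdivisionData G K) : SuccessfulSearch K (Fintype.card V + 2) := by
  classical
  set k := Fintype.card V + 2 with hkdef
  set B := Set.range D.f with hB
  have hBcard : B.ncard ≤ Fintype.card V := by
    rw [hB, ← Set.image_univ]
    calc (D.f '' Set.univ).ncard ≤ (Set.univ : Set V).ncard := Set.ncard_image_le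
          (Set.finite_univ)
      _ = Fintype.card V := by rw [Set.ncard_univ, Nat.card_eq_fintype_card]
  have hk : B.ncard + 2 ≤ k := by omega
  set SX : Finset (V × V) → Set W := fun P =>
    B ∪ ⋃ pq ∈ P, ⋃ (hpq : G.Adj pq.1 pq.2), {w | w ∈ (D.walk hpq).support} with hSX
  have claim : ∀ P : Finset (V × V), Reach K k (clean K (SX P)) ∧
      (∀ w ∈ SX P, w ∉ B → ∀ w', K.Adj w w' → w' ∈ SX P) := by
    intro P
    induction P using Finset.induction_on with
    | empty =>
      constructor
      · have h0 : SX ∅ = B := by simp [hSX]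
        rw [h0]
        have : Reach K k (clean K (∅ : Set W)) := by
          rw [clean_empty]; exact reach_empty K k
        have step := reach_clean_step this B (by simp) (by omega)
        rwa [Set.empty_union] at step
      · intro w hw hwB
        rw [show SX ∅ = B by simp [hSX]] at hw
        exact absurd hw hwB
    | @insert pq P hpq ih =>
      by_cases hadj : G.Adj pq.1 pq.2
      · have hins : SX (insert pq P) = SX P ∪ {w | w ∈ (D.walk hadj).support} := by
          ext w
          simp only [hSX, Set.mem_union, Set.mem_iUnion, Finset.mem_insert]
          constructor
          · rintro (hw | ⟨q, (rfl | hq), h', hw⟩)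
            · exact Or.inl (Or.inl hw)
            · exact Or.inr hw
            · exact Or.inl (Or.inr ⟨q, hq, h', hw⟩)
          · rintro ((hw | ⟨q, hq, h', hw⟩) | hw)
            · exact Or.inl hw
            · exact Or.inr ⟨q, Or.inr hq, h', hw⟩
            · exact Or.inr ⟨pq, Or.inl rfl, hadj, hw⟩
        constructor
        · rw [hins]
          exact sweep D hk hadj (fun w hw => Or.inl hw) ih.2 ih.1
        · intro w hw hwB w' hadj'
          rw [hins] at hw ⊢
          rcases hw with hw | hw
          · exact Or.inl (ih.2 w hw hwB w' hadj')
          · obtain ⟨r, hgv, hr⟩ := SimpleGraph.Walk.mem_support_iff_exists_getVert.mp hw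
            subst hgv
            obtain ⟨r', hr', hw', _⟩ := nbr_on_walk D hadj hr hwB hadj'
            exact Or.inr (hw' ▸ getVert_mem_support _ hr')
      · have hins : SX (insert pq P) = SX P := by
          ext w
          simp only [hSX, Set.mem_union, Set.mem_iUnion, Finset.mem_insert]
          constructor
          · rintro (hw | ⟨q, (rfl | hq), h', hw⟩)
            · exact Or.inl hw
            · exact absurd h' hadj
            · exact Or.inr ⟨q, hq, h', hw⟩
          · rintro (hw | ⟨q, hq, h', hw⟩)
            · exact Or.inl hw
            · exact Or.inr ⟨q, Or.inr hq, h', hw⟩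
        rw [hins]
        exact ih
  have huniv : SX Finset.univ = Set.univ := by
    apply Set.eq_univ_of_univ_subset
    intro w _
    rcases D.cover_vert w with hw | ⟨a, b, hab, hw⟩
    · exact Or.inl hw
    · exact Or.inr (Set.mem_iUnion.mpr ⟨(a, b), Set.mem_iUnion.mpr
        ⟨Finset.mem_univ _, Set.mem_iUnion.mpr ⟨hab, hw⟩⟩⟩)
  have := (claim Finset.univ).1
  rw [huniv, clean_univ] at this
  exact this


lemma univ_finite_of_subdivisionData {G : SimpleGraph V} {K : SimpleGraph W}
    (D : SubdivisionData G K) (hV : (Set.univ : Set V).Finite) :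
    (Set.univ : Set W).Finite := by
  have : Finite V := Set.finite_univ_iff.mp hV
  have hsub : (Set.univ : Set W) ⊆ Set.range D.f ∪
      ⋃ (e : {pq : V × V // G.Adj pq.1 pq.2}), {w | w ∈ (D.walk e.2).support} := by
    intro w _
    rcases D.cover_vert w with hw | ⟨u, v, h, hw⟩
    · exact Or.inl hw
    · exact Or.inr (Set.mem_iUnion.mpr ⟨⟨(u, v), h⟩, hw⟩)
  refine Set.Finite.subset (Set.Finite.union (Set.finite_range D.f) ?_) hsub
  exact Set.finite_iUnion fun e => (D.walk e.2).support.finite_toSet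

/-- The identity subdivision. -/
def reflSubdivisionData (H : SimpleGraph W) : SubdivisionData H H where
  f := id
  inj := fun _ _ h => h
  walk := fun h => SimpleGraph.Walk.cons h SimpleGraph.Walk.nil
  isPath := fun h => by simp [SimpleGraph.Walk.cons_isPath_iff, h.ne]
  symm := fun h => rfl
  disj := fun _ _ _ w _ _ => ⟨w, rfl⟩
  branch := fun h w hw _ => by
    simpa [SimpleGraph.Walk.support_cons] using hw
  cover_vert := fun w => Or.inl ⟨w, rfl⟩
  cover_edge := fun e he => by
    induction e with
    | _ u v =>
      rw [SimpleGraph.mem_edgeSet] at he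
      exact ⟨u, v, he, by simp [SimpleGraph.Walk.edges_cons]⟩

lemma walk2_congr {K : SimpleGraph W} {a b m m' : W} (hm : m = m')
    (h1 : K.Adj a m) (h2 : K.Adj m b) (h1' : K.Adj a m') (h2' : K.Adj m' b) :
    SimpleGraph.Walk.cons h1 (SimpleGraph.Walk.cons h2 SimpleGraph.Walk.nil) =
      SimpleGraph.Walk.cons h1' (SimpleGraph.Walk.cons h2' SimpleGraph.Walk.nil) := by
  subst hm; rfl

variable (G : SimpleGraph V)

/-- The graph obtained from `G` by subdividing every edge once. -/
def subOnce : SimpleGraph (V ⊕ ↥G.edgeSet) where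
  Adj a b := match a, b with
    | Sum.inl u, Sum.inr e => u ∈ (e : Sym2 V)
    | Sum.inr e, Sum.inl u => u ∈ (e : Sym2 V)
    | _, _ => False
  symm := ⟨by rintro (u | e) (v | f) h <;> exact h⟩
  loopless := ⟨by rintro (u | e) h <;> exact h⟩

variable {G}

def M {u v : V} (h : G.Adj u v) : ↥G.edgeSet := ⟨s(u, v), (SimpleGraph.mem_edgeSet G).mpr h⟩

lemma subOnce_adj_l {u : V} {e : ↥G.edgeSet} : (subOnce G).Adj (Sum.inl u) (Sum.inr e) ↔ u ∈ (e : Sym2 V) :=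
  Iff.rfl
lemma subOnce_adj_r {u : V} {e : ↥G.edgeSet} : (subOnce G).Adj (Sum.inr e) (Sum.inl u) ↔ u ∈ (e : Sym2 V) :=
  Iff.rfl

def subOnceWalk {u v : V} (h : G.Adj u v) :
    (subOnce G).Walk (Sum.inl u) (Sum.inl v) :=
  SimpleGraph.Walk.cons (subOnce_adj_l.mpr (by simp [M]))
    (SimpleGraph.Walk.cons (subOnce_adj_r.mpr (by simp [M]) :
      (subOnce G).Adj (Sum.inr (M h)) (Sum.inl v)) SimpleGraph.Walk.nil)

/-- `subOnce G` is a subdivision of `G`. -/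
def subOnceData : SubdivisionData G (subOnce G) where
  f := Sum.inl
  inj := fun _ _ h => Sum.inl.inj h
  walk := fun h => subOnceWalk h
  isPath := fun h => by
    simp [subOnceWalk, SimpleGraph.Walk.cons_isPath_iff, h.ne]
  symm := fun h => by
    have hm : (Sum.inr (M h.symm) : V ⊕ ↥G.edgeSet) = Sum.inr (M h) := by
      congr 1
      exact Subtype.ext (Sym2.eq_swap)
    exact walk2_congr hm _ _ _ _
  disj := fun {u v x y} h₁ h₂ hne w hw1 hw2 => by
    simp only [subOnceWalk, SimpleGraph.Walk.support_cons, SimpleGraph.Walk.support_nil,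
      List.mem_cons, List.mem_singleton] at hw1 hw2
    rcases hw1 with rfl | rfl | rfl | h
    · exact ⟨u, rfl⟩
    · rcases hw2 with h | h | h | h
      · exact absurd h (by simp)
      · exfalso
        apply hne
        have := Sum.inr.inj h
        exact (Subtype.ext_iff.mp this)
      · exact absurd h (by simp)
      · simp at h
    · exact ⟨v, rfl⟩
    · simp at h
  branch := fun {u v} h w hw hr => by
    simp only [subOnceWalk, SimpleGraph.Walk.support_cons, SimpleGraph.Walk.support_nil,
      List.mem_cons, List.mem_singleton] at hw
    obtain ⟨z, rfl⟩ := hr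
    rcases hw with h' | h' | h' | h'
    · exact Or.inl h'
    · simp at h'
    · exact Or.inr h'
    · simp at h'
  cover_vert := fun w => by
    match w with
    | Sum.inl u => exact Or.inl ⟨u, rfl⟩
    | Sum.inr e =>
      obtain ⟨e, he⟩ := e
      right
      induction e with
      | _ a b =>
        have h : G.Adj a b := (SimpleGraph.mem_edgeSet G).mp he
        refine ⟨a, b, h, ?_⟩
        simp only [subOnceWalk, SimpleGraph.Walk.support_cons, SimpleGraph.Walk.support_nil]
        exact List.mem_cons_of_mem _ List.mem_cons_self
  cover_edge := fun e he => by
    induction e with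
    | _ α β =>
      rw [SimpleGraph.mem_edgeSet] at he
      match α, β, he with
      | Sum.inl u, Sum.inr ⟨ee, hee⟩, he =>
        have hu : u ∈ ee := he
        induction ee with
        | _ a b =>
          have h : G.Adj a b := (SimpleGraph.mem_edgeSet G).mp hee
          rcases Sym2.mem_iff.mp hu with rfl | rfl
          · exact ⟨u, b, h, by simp only [subOnceWalk, SimpleGraph.Walk.edges_cons]; exact List.mem_cons_self⟩
          · refine ⟨a, u, h, ?_⟩
            simp only [subOnceWalk, SimpleGraph.Walk.edges_cons, SimpleGraph.Walk.edges_nil,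
              List.mem_cons, List.not_mem_nil, or_false]
            right
            rw [Sym2.eq_swap]
            rfl
      | Sum.inr ⟨ee, hee⟩, Sum.inl u, he =>
        have hu : u ∈ ee := he
        induction ee with
        | _ a b =>
          have h : G.Adj a b := (SimpleGraph.mem_edgeSet G).mp hee
          rcases Sym2.mem_iff.mp hu with rfl | rfl
          · refine ⟨u, b, h, ?_⟩
            simp only [subOnceWalk, SimpleGraph.Walk.edges_cons, SimpleGraph.Walk.edges_nil,
              List.mem_cons, List.not_mem_nil, or_false]
            left
            rw [Sym2.eq_swap]
            rfl
          · refine ⟨a, u, h, ?_⟩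
            simp only [subOnceWalk, SimpleGraph.Walk.edges_cons, SimpleGraph.Walk.edges_nil,
              List.mem_cons, List.not_mem_nil, or_false]
            right
            rfl


/-- every walk between images of distinct vertices has length at least 1 -/
lemma one_le_walk_length {G : SimpleGraph V} {K : SimpleGraph W}
    (D : SubdivisionData G K) {α β : V} (h : G.Adj α β) : 1 ≤ (D.walk h).length := by
  by_contra hlen
  have h0 : (D.walk h).length = 0 := by omega
  exact h.ne (D.inj (SimpleGraph.Walk.eq_of_length_eq_zero h0))

/-- In a closed walk, every support vertex has an out-dart and an in-dart. -/
lemma walk_dart_out {G : SimpleGraph V} {s t : V} (p : G.Walk s t) :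
    ∀ a ∈ p.support, a ≠ t → ∃ d ∈ p.darts, d.toProd.1 = a := by
  induction p with
  | nil => intro a ha hat; simp at ha; exact absurd ha hat
  | @cons x y z h q ih =>
    intro a ha hat
    rw [SimpleGraph.Walk.support_cons, List.mem_cons] at ha
    rcases ha with rfl | ha
    · exact ⟨⟨(a, y), h⟩, by simp [SimpleGraph.Walk.darts_cons], rfl⟩
    · obtain ⟨d, hd, hda⟩ := ih a ha hat
      exact ⟨d, by simp [SimpleGraph.Walk.darts_cons, hd], hda⟩

lemma walk_dart_in {G : SimpleGraph V} {s t : V} (p : G.Walk s t) :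
    ∀ a ∈ p.support, a ≠ s → ∃ d ∈ p.darts, d.toProd.2 = a := by
  induction p with
  | nil => intro a ha hat; simp at ha; exact absurd ha hat
  | @cons x y z h q ih =>
    intro a ha hax
    rw [SimpleGraph.Walk.support_cons, List.mem_cons] at ha
    rcases ha with rfl | ha
    · exact absurd rfl hax
    · by_cases hay : a = y
      · exact ⟨⟨(x, y), h⟩, by simp [SimpleGraph.Walk.darts_cons], hay.symm⟩
      · obtain ⟨d, hd, hda⟩ := ih a ha hay
        exact ⟨d, by simp [SimpleGraph.Walk.darts_cons, hd], hda⟩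

/-- At every support vertex of a cycle there are two distinct neighbors along cycle edges. -/
lemma cycle_two_nbrs {G : SimpleGraph V} {u0 : V} {c : G.Walk u0 u0} (hc : c.IsCycle)
    {a : V} (ha : a ∈ c.support) :
    ∃ z1 z2, z1 ≠ z2 ∧ G.Adj a z1 ∧ G.Adj a z2 ∧ s(a, z1) ∈ c.edges ∧ s(a, z2) ∈ c.edges := by
  have hout : ∃ d ∈ c.darts, d.toProd.1 = a := by
    by_cases hau : a = u0
    · subst hau
      cases c with
      | nil => exact absurd hc SimpleGraph.Walk.IsCycle.not_of_nil
      | cons h q => exact ⟨⟨(a, _), h⟩, by simp [SimpleGraph.Walk.darts_cons], rfl⟩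
    · exact walk_dart_out c a ha hau
  have hin : ∃ d ∈ c.darts, d.toProd.2 = a := by
    by_cases hau : a = u0
    · subst hau
      cases c with
      | nil => exact absurd hc SimpleGraph.Walk.IsCycle.not_of_nil
      | @cons x y z h q =>
        have : a ∈ q.support := SimpleGraph.Walk.end_mem_support q
        obtain ⟨d, hd, hda⟩ := walk_dart_in q a this h.ne
        exact ⟨d, by simp [SimpleGraph.Walk.darts_cons, hd], hda⟩
    · exact walk_dart_in c a ha hau
  obtain ⟨d1, hd1, hd1a⟩ := hout
  obtain ⟨d2, hd2, hd2a⟩ := hin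
  refine ⟨d1.toProd.2, d2.toProd.1, ?_, ?_, ?_, ?_, ?_⟩
  · -- distinct
    intro heq
    have hne : d1 ≠ d2 := by
      intro h
      have hadj := d1.adj
      rw [hd1a] at hadj
      have h2a : d1.toProd.2 = a := by rw [h]; exact hd2a
      rw [h2a] at hadj
      exact hadj.ne rfl
    have hedge : d1.edge = d2.edge := by
      have e1 : d1.edge = s(a, d1.toProd.2) := by
        rw [← hd1a]; rfl
      have e2 : d2.edge = s(d2.toProd.1, a) := by
        rw [← hd2a]; rfl
      rw [e1, e2, heq, Sym2.eq_swap]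
    have hnodup : c.edges.Nodup := hc.isCircuit.isTrail.edges_nodup
    exact hne (List.inj_on_of_nodup_map hnodup hd1 hd2 hedge)
  · have := d1.adj; rwa [hd1a] at this
  · have := d2.adj; rw [hd2a] at this; exact this.symm
  · have : d1.edge ∈ c.edges := List.mem_map_of_mem hd1
    have he : d1.edge = s(a, d1.toProd.2) := by rw [← hd1a]; rfl
    rwa [he] at this
  · have : d2.edge ∈ c.edges := List.mem_map_of_mem hd2
    have he : d2.edge = s(d2.toProd.1, a) := by rw [← hd2a]; rfl
    rw [he] at this
    rwa [Sym2.eq_swap] at this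

/-- From a cycle in `G`, extract a min-degree-two set in any subdivision of `G`. -/
lemma cycle_extract {G : SimpleGraph V} {K : SimpleGraph W} (D : SubdivisionData G K)
    {u0 : V} (c : G.Walk u0 u0) (hc : c.IsCycle) :
    ∃ C : Set W, C.Nonempty ∧
      ∀ w ∈ C, ∃ a b, a ≠ b ∧ K.Adj w a ∧ K.Adj w b ∧ a ∈ C ∧ b ∈ C := by
  classical
  set C : Set W := {w | ∃ a b, ∃ h : G.Adj a b, s(a, b) ∈ c.edges ∧ w ∈ (D.walk h).support}
    with hC
  have hbranchcase : ∀ (a : V), a ∈ c.support → ∃ s t, s ≠ t ∧ K.Adj (D.f a) s ∧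
      K.Adj (D.f a) t ∧ s ∈ C ∧ t ∈ C := by
    intro a ha
    obtain ⟨z1, z2, hz, h1, h2, e1, e2⟩ := cycle_two_nbrs hc ha
    set p1 := D.walk h1 with hp1
    set p2 := D.walk h2 with hp2
    have l1 : 1 ≤ p1.length := one_le_walk_length D h1
    have l2 : 1 ≤ p2.length := one_le_walk_length D h2
    have hx1adj : K.Adj (D.f a) (p1.getVert 1) := by
      have := p1.adj_getVert_succ (i := 0) (by omega)
      rwa [SimpleGraph.Walk.getVert_zero] at this
    have hx2adj : K.Adj (D.f a) (p2.getVert 1) := by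
      have := p2.adj_getVert_succ (i := 0) (by omega)
      rwa [SimpleGraph.Walk.getVert_zero] at this
    refine ⟨p1.getVert 1, p2.getVert 1, ?_, hx1adj, hx2adj,
      ⟨a, z1, h1, e1, getVert_mem_support p1 (by omega)⟩,
      ⟨a, z2, h2, e2, getVert_mem_support p2 (by omega)⟩⟩
    intro heq
    have hne : s(a, z1) ≠ s(a, z2) := by
      intro hE
      rcases Sym2.eq_iff.mp hE with ⟨-, h'⟩ | ⟨h', -⟩
      · exact hz h'
      · exact h2.ne h'
    have hmem1 : p1.getVert 1 ∈ p1.support := getVert_mem_support p1 (by omega)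
    have hmem2 : p1.getVert 1 ∈ p2.support := heq ▸ getVert_mem_support p2 (by omega)
    have hrange := D.disj h1 h2 hne _ hmem1 hmem2
    rcases D.branch h1 _ hmem1 hrange with hfa | hfz1
    · exact hx1adj.ne' hfa
    · rcases D.branch h2 _ hmem2 hrange with hfa | hfz2
      · exact hx1adj.ne' hfa
      · rw [hfz1] at hfz2
        exact hz (D.inj hfz2)
  refine ⟨C, ?_, ?_⟩
  · -- nonempty
    obtain ⟨z1, z2, hz, h1, h2, e1, e2⟩ := cycle_two_nbrs hc (SimpleGraph.Walk.start_mem_support c)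
    exact ⟨D.f u0, u0, z1, h1, e1, SimpleGraph.Walk.start_mem_support _⟩
  · intro w hwC
    obtain ⟨a, b, hab, he, hw⟩ := hwC
    by_cases hwB : w ∈ Set.range D.f
    · rcases D.branch hab w hw hwB with rfl | rfl
      · exact hbranchcase a (SimpleGraph.Walk.fst_mem_support_of_mem_edges c he)
      · exact hbranchcase b (SimpleGraph.Walk.snd_mem_support_of_mem_edges c he)
    · have hwfa : w ≠ D.f a := fun h => hwB ⟨a, h.symm⟩
      have hwfb : w ≠ D.f b := fun h => hwB ⟨b, h.symm⟩
      obtain ⟨s', t', hst, hs, ht, hsm, htm⟩ :=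
        interior_two_nbrs (D.walk hab) (D.isPath hab) hw hwfa hwfb
      exact ⟨s', t', hst, hs, ht, ⟨a, b, hab, he, hsm⟩, ⟨a, b, hab, he, htm⟩⟩


/-- Extraction of a spider configuration in a subdivision of `subOnce G`
around a vertex of degree ≥ 3. -/
lemma spider_extract {K : SimpleGraph W} (D : SubdivisionData (subOnce G) K)
    {u : V} (a : Fin 3 → V) (hai : Function.Injective a) (ha : ∀ i, G.Adj u (a i)) :
    ∃ (v : W) (x y : Fin 3 → W), (∀ i, K.Adj v (x i)) ∧ (∀ i, K.Adj (x i) (y i)) ∧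
      Function.Injective x ∧ (∀ i, v ≠ y i) := by
  classical
  have h1 : ∀ i, (subOnce G).Adj (Sum.inl u) (Sum.inr (M (ha i))) :=
    fun i => subOnce_adj_l.mpr (by simp [M])
  have h2 : ∀ i, (subOnce G).Adj (Sum.inr (M (ha i))) (Sum.inl (a i)) :=
    fun i => subOnce_adj_r.mpr (by simp [M])
  let v : W := D.f (Sum.inl u)
  let p : (i : Fin 3) → K.Walk v (D.f (Sum.inl (a i))) :=
    fun i => (D.walk (h1 i)).append (D.walk (h2 i))
  let x : Fin 3 → W := fun i => (p i).getVert 1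
  let y : Fin 3 → W := fun i => (p i).getVert 2
  have hp : ∀ i, p i = (D.walk (h1 i)).append (D.walk (h2 i)) := fun _ => rfl
  have hv : v = D.f (Sum.inl u) := rfl
  have hl1 : ∀ i, 1 ≤ (D.walk (h1 i)).length := fun i => one_le_walk_length D (h1 i)
  have hl2 : ∀ i, 1 ≤ (D.walk (h2 i)).length := fun i => one_le_walk_length D (h2 i)
  have hlen : ∀ i, 2 ≤ (p i).length := by
    intro i
    rw [hp i, SimpleGraph.Walk.length_append]
    have := hl1 i; have := hl2 i
    omega
  have hvx : ∀ i, K.Adj v (x i) := by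
    intro i
    have := (p i).adj_getVert_succ (i := 0) (by have := hlen i; omega)
    rwa [SimpleGraph.Walk.getVert_zero] at this
  have hxy : ∀ i, K.Adj (x i) (y i) := by
    intro i
    exact (p i).adj_getVert_succ (i := 1) (by have := hlen i; omega)
  have hMne : ∀ i j, i ≠ j → M (ha i) ≠ M (ha j) := by
    intro i j hij hM
    have := Subtype.ext_iff.mp hM
    simp only [M] at this
    rcases Sym2.eq_iff.mp this with ⟨-, h'⟩ | ⟨h', -⟩
    · exact hij (hai h')
    · exact (ha j).ne h'
  have leg_mem : ∀ i (w : W), w ∈ (p i).support → w ∈ Set.range D.f →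
      w = v ∨ w = D.f (Sum.inr (M (ha i))) ∨ w = D.f (Sum.inl (a i)) := by
    intro i w hw hr
    rw [hp i, SimpleGraph.Walk.mem_support_append_iff] at hw
    rcases hw with hw | hw
    · rcases D.branch (h1 i) w hw hr with h' | h'
      · exact Or.inl h'
      · exact Or.inr (Or.inl h')
    · rcases D.branch (h2 i) w hw hr with h' | h'
      · exact Or.inr (Or.inl h')
      · exact Or.inr (Or.inr h')
  have cross : ∀ i j, i ≠ j → ∀ w : W, w ∈ (p i).support → w ∈ (p j).support → w = v := by
    intro i j hij w hwi hwj
    have hrange : w ∈ Set.range D.f := by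
      rw [hp i, SimpleGraph.Walk.mem_support_append_iff] at hwi
      rw [hp j, SimpleGraph.Walk.mem_support_append_iff] at hwj
      have hMij := hMne i j hij
      rcases hwi with hwi | hwi <;> rcases hwj with hwj | hwj
      · refine D.disj (h1 i) (h1 j) ?_ w hwi hwj
        intro hE
        rcases Sym2.eq_iff.mp hE with ⟨-, h'⟩ | ⟨h', -⟩
        · exact hMij (Sum.inr.inj h')
        · simp at h'
      · refine D.disj (h1 i) (h2 j) ?_ w hwi hwj
        intro hE
        rcases Sym2.eq_iff.mp hE with ⟨h', -⟩ | ⟨h', h''⟩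
        · simp at h'
        · exact (ha j).ne (Sum.inl.inj h')
      · refine D.disj (h2 i) (h1 j) ?_ w hwi hwj
        intro hE
        rcases Sym2.eq_iff.mp hE with ⟨h', -⟩ | ⟨-, h'⟩
        · simp at h'
        · exact (ha i).ne (Sum.inl.inj h').symm
      · refine D.disj (h2 i) (h2 j) ?_ w hwi hwj
        intro hE
        rcases Sym2.eq_iff.mp hE with ⟨h', -⟩ | ⟨h', -⟩
        · exact hMij (Sum.inr.inj h')
        · simp at h'
    rcases leg_mem i w hwi hrange with h' | h' | h'
    · exact h'
    · exfalso
      rcases leg_mem j w hwj hrange with h'' | h'' | h''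
      · rw [h'] at h''
        have := D.inj h''
        simp at this
      · rw [h'] at h''
        exact hMne i j hij (Sum.inr.inj (D.inj h''))
      · rw [h'] at h''
        have := D.inj h''
        simp at this
    · exfalso
      rcases leg_mem j w hwj hrange with h'' | h'' | h''
      · rw [h'] at h''
        have := D.inj h''
        rw [Sum.inl.injEq] at this
        exact (ha i).ne this.symm
      · rw [h'] at h''
        have := D.inj h''
        simp at this
      · rw [h'] at h''
        have := D.inj h''
        rw [Sum.inl.injEq] at this
        exact hij (hai this)
  refine ⟨v, x, y, hvx, hxy, ?_, ?_⟩
  · intro i j hij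
    by_contra hne
    have hxij : x i = x j := hij
    have hmi : x i ∈ (p i).support := getVert_mem_support (p i) (by have := hlen i; omega)
    have hmj : x i ∈ (p j).support := by
      rw [hxij]
      exact getVert_mem_support (p j) (by have := hlen j; omega)
    exact (hvx i).ne' (cross i j hne (x i) hmi hmj)
  · intro i hyv
    have key : y i = ((D.walk (h1 i)).append (D.walk (h2 i))).getVert 2 := rfl
    rw [SimpleGraph.Walk.getVert_append] at key
    rcases Nat.lt_or_ge 2 (D.walk (h1 i)).length with hcase | hcase
    · -- length ≥ 3 : y i on walk1
      rw [if_pos hcase] at key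
      have h0 : v = (D.walk (h1 i)).getVert 0 := (SimpleGraph.Walk.getVert_zero _).symm
      have : (0 : ℕ) = 2 := by
        apply getVert_inj_of_isPath (D.isPath (h1 i)) (by omega) (by omega)
        rw [← h0, ← key, hyv]
      omega
    · rw [if_neg (by omega)] at key
      rcases Nat.eq_or_lt_of_le (hl1 i) with hl | hl
      · -- length = 1 : y i = walk2.getVert 1
        have h21 : y i = (D.walk (h2 i)).getVert 1 := by rw [key, ← hl]
        have hmem : y i ∈ (D.walk (h2 i)).support := by
          rw [h21]; exact getVert_mem_support _ (hl2 i)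
        rw [← hyv] at hmem
        rcases D.branch (h2 i) v hmem ⟨Sum.inl u, rfl⟩ with h' | h'
        · have := D.inj h'
          simp at this
        · have := D.inj h'
          rw [Sum.inl.injEq] at this
          exact (ha i).ne this
      · -- length = 2 : y i = walk2.getVert 0 = f (inr (M (ha i)))
        have hl2' : (D.walk (h1 i)).length = 2 := by omega
        have h20 : y i = (D.walk (h2 i)).getVert 0 := by rw [key, hl2']
        rw [SimpleGraph.Walk.getVert_zero] at h20
        rw [h20] at hyv
        have := D.inj hyv
        simp at this


/-- A connected finite simple graph with `in_t(G) ≤ 2` is a path, i.e. it is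
acyclic and has maximum degree at most `2`. -/

theorem isPath_of_topInspectionNumber_le_two {V : Type} [Fintype V] (G : SimpleGraph V)
    (hconn : G.Connected) (h : topInspectionNumber G ≤ 2) :
    G.IsAcyclic ∧ ∀ v : V, (G.neighborSet v).ncard ≤ 2 := by
  classical
  by_contra hcon
  set TS : Set ℕ := {k | ∀ (W' : Type) (H : SimpleGraph W'), IsSubdivision G H →
    ∃ (W'' : Type) (H' : SimpleGraph W''), IsSubdivision H H' ∧ inspectionNumber H' ≤ k}
    with hTS
  have hne : TS.Nonempty := by
    refine ⟨Fintype.card V + 2, ?_⟩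
    intro W' H hsub
    obtain ⟨D⟩ := hsub
    exact ⟨W', H, ⟨reflSubdivisionData H⟩, Nat.sInf_le (successful_of_subdivisionData D)⟩
  have hmem : topInspectionNumber G ∈ TS := Nat.sInf_mem hne
  rw [not_and_or] at hcon
  rcases hcon with hcyc | hdeg
  · -- G has a cycle
    have hex : ∃ (u0 : V) (c : G.Walk u0 u0), c.IsCycle := by
      by_contra h'
      push_neg at h'
      exact hcyc (fun v c hc => h' v c hc)
    obtain ⟨u0, c, hc⟩ := hex
    obtain ⟨W'', H', ⟨D⟩, hins⟩ := hmem V G ⟨reflSubdivisionData G⟩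
    have hfin : (Set.univ : Set W'').Finite :=
      univ_finite_of_subdivisionData D Set.finite_univ
    obtain ⟨C, hCne, hC2⟩ := cycle_extract D c hc
    exact no_two_search_of_cycleset hfin C hCne hC2 (le_trans hins h)
      (exists_successful_inspectionNumber H')
  · -- G has a vertex of degree at least 3
    push_neg at hdeg
    obtain ⟨u, hu⟩ := hdeg
    have hNfin : (G.neighborSet u).Finite := Set.toFinite _
    obtain ⟨a0, ha0⟩ := (Set.ncard_pos hNfin).mp (by omega)
    have hd1 : (G.neighborSet u \ {a0}).ncard = (G.neighborSet u).ncard - 1 :=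
      Set.ncard_diff_singleton_of_mem ha0
    have hpos1 : 0 < (G.neighborSet u \ {a0}).ncard := by rw [hd1]; omega
    obtain ⟨a1, ha1⟩ := (Set.ncard_pos (hNfin.subset Set.diff_subset)).mp hpos1
    have hd2 : ((G.neighborSet u \ {a0}) \ {a1}).ncard =
        (G.neighborSet u \ {a0}).ncard - 1 :=
      Set.ncard_diff_singleton_of_mem ha1
    have hpos2 : 0 < ((G.neighborSet u \ {a0}) \ {a1}).ncard := by
      rw [hd2, hd1]; omega
    obtain ⟨a2, ha2⟩ := (Set.ncard_pos ((hNfin.subset Set.diff_subset).subset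
      Set.diff_subset)).mp hpos2
    have ha0N : a0 ∈ G.neighborSet u := ha0
    have ha1N : a1 ∈ G.neighborSet u := ha1.1
    have ha2N : a2 ∈ G.neighborSet u := ha2.1.1
    have h01 : a1 ≠ a0 := fun hE => ha1.2 (by simp [hE])
    have h02 : a2 ≠ a0 := fun hE => ha2.1.2 (by simp [hE])
    have h12 : a2 ≠ a1 := fun hE => ha2.2 (by simp [hE])
    set a : Fin 3 → V := ![a0, a1, a2] with haf
    have hai : Function.Injective a := by
      intro i j hij
      fin_cases i <;> fin_cases j <;> try rfl
      all_goals
        (exfalso; simp only [haf, Matrix.cons_val_zero, Matrix.cons_val_one, Matrix.head_cons,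
          Matrix.cons_val_two, Matrix.tail_cons] at hij
         first
          | exact h01 hij.symm | exact h01 hij
          | exact h02 hij.symm | exact h02 hij
          | exact h12 hij.symm | exact h12 hij)
    have ha : ∀ i, G.Adj u (a i) := by
      intro i
      fin_cases i
      · simpa [haf] using ha0N
      · simpa [haf] using ha1N
      · simpa [haf] using ha2N
    obtain ⟨W'', H', ⟨D⟩, hins⟩ := hmem (V ⊕ ↥G.edgeSet) (subOnce G) ⟨subOnceData⟩
    have hfinsum : (Set.univ : Set (V ⊕ ↥G.edgeSet)).Finite := by
      have : Finite ↥G.edgeSet := (Set.toFinite G.edgeSet).to_subtype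
      exact Set.finite_univ
    have hfin : (Set.univ : Set W'').Finite :=
      univ_finite_of_subdivisionData D hfinsum
    obtain ⟨v, x, y, hvx, hxy, hxinj, hvy⟩ := spider_extract D a hai ha
    exact no_two_search_of_spider hfin v x y hvx hxy hxinj hvy (le_trans hins h)
      (exists_successful_inspectionNumber H')

end Inspection
end

section
/- Let G be a finite simple graph with a vertex v of degree at least 3, and let G' be a subdivision of G in which every edge incident to v is subdivided at least once. Then in(G') ≥ 3. -/
open SimpleGraph


namespace Inspection

variable {V : Type*} {W : Type*}

section Aux

variable {W : Type*}

lemma mem_FC_succ_s11 {H : SimpleGraph W} {S : ℕ → Set W} {t : ℕ} {z : W} :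
    z ∈ FC H S (t + 1) ↔
      z ∈ FC H S t ∪ S (t + 1) ∧ ∀ y, H.Adj z y → y ∈ FC H S t ∪ S (t + 1) := by
  constructor
  · rintro ⟨h1, h2⟩
    exact ⟨h1, fun y hy => by by_contra hc; exact h2 ⟨h1, y, hc, hy⟩⟩
  · rintro ⟨h1, h2⟩
    exact ⟨h1, fun hb => hb.2.elim fun y hy => hy.1 (h2 y hy.2)⟩

lemma ncard_ge_three [Fintype W] {S : Set W} {a b c : W}
    (ha : a ∈ S) (hb : b ∈ S) (hc : c ∈ S) (hab : a ≠ b) (hac : a ≠ c) (hbc : b ≠ c) :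
    3 ≤ S.ncard := by
  have h1 : ({a, b, c} : Set W).ncard = 3 := by
    rw [Set.ncard_insert_of_notMem (by simp [hab, hac]), Set.ncard_pair hbc]
  calc 3 = ({a, b, c} : Set W).ncard := h1.symm
    _ ≤ S.ncard := Set.ncard_le_ncard
        (by
          intro z hz
          simp only [Set.mem_insert_iff, Set.mem_singleton_iff] at hz
          rcases hz with h | h | h <;> subst h <;> assumption)
        (Set.toFinite S)

lemma eq_pair [Fintype W] {S : Set W} {a b : W} (ha : a ∈ S) (hb : b ∈ S)
    (hab : a ≠ b) (hcard : S.ncard ≤ 2) : S = {a, b} :=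
  (Set.eq_of_subset_of_ncard_le
    (by
      intro z hz
      simp only [Set.mem_insert_iff, Set.mem_singleton_iff] at hz
      rcases hz with h | h <;> subst h <;> assumption)
    (by rwa [Set.ncard_pair hab]) (Set.toFinite S)).symm

lemma spider_inv [Fintype W] (H : SimpleGraph W) (c : W) (u x : Fin 3 → W)
    (hcu : ∀ i, H.Adj c (u i)) (hux : ∀ i, H.Adj (u i) (x i))
    (hcu' : ∀ i, c ≠ u i) (hcx' : ∀ i, c ≠ x i) (hux' : ∀ i, u i ≠ x i)
    (huinj : ∀ i j, i ≠ j → u i ≠ u j)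
    (S : ℕ → Set W) (ℓ : ℕ) (hS : ∀ t, 1 ≤ t → t ≤ ℓ → (S t).ncard ≤ 2) :
    ∀ s, s ≤ ℓ →
      c ∉ FC H S s ∧
      (∀ a b, a ≠ b → ¬(u a ∈ FC H S s ∧ u b ∈ FC H S s)) ∧
      (∀ a b, a ≠ b → ¬(u a ∈ FC H S s ∧ x b ∈ FC H S s)) := by
  intro s
  induction s with
  | zero => intro _; refine ⟨by simp [FC], ?_, ?_⟩ <;> rintro a b hab ⟨h, -⟩ <;>
      simp [FC] at h
  | succ t ih =>
    intro hsl
    obtain ⟨ih1, ih2, ih3⟩ := ih (by omega)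
    have hScard : (S (t + 1)).ncard ≤ 2 := hS (t + 1) (by omega) hsl
    have memFC : ∀ z, z ∈ FC H S (t + 1) →
        z ∈ FC H S t ∪ S (t + 1) ∧ ∀ y, H.Adj z y → y ∈ FC H S t ∪ S (t + 1) :=
      fun z hz => mem_FC_succ_s11.mp hz
    have hcS : ∀ i, u i ∈ FC H S (t + 1) → c ∈ S (t + 1) := by
      intro i hi
      rcases (memFC _ hi).2 c (hcu i).symm with h | h
      · exact absurd h ih1
      · exact h
    have part3 : ∀ a b, a ≠ b → ¬(u a ∈ FC H S (t + 1) ∧ x b ∈ FC H S (t + 1)) := by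
      rintro a b hab ⟨hua, hxb⟩
      have hcs := hcS a hua
      have hubP : u b ∈ FC H S t ∪ S (t + 1) := (memFC _ hxb).2 (u b) (hux b).symm
      by_cases hubF : u b ∈ FC H S t
      · rcases (memFC _ hua).1 with huaF | huaS
        · exact ih2 a b hab ⟨huaF, hubF⟩
        · have hSeq : S (t + 1) = {c, u a} := eq_pair hcs huaS (hcu' a) hScard
          have hxaF : x a ∈ FC H S t := by
            rcases (memFC _ hua).2 (x a) (hux a) with h | h
            · exact h
            · rw [hSeq] at h
              simp only [Set.mem_insert_iff, Set.mem_singleton_iff] at h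
              rcases h with h | h
              · exact absurd h.symm (hcx' a)
              · exact absurd h.symm (hux' a)
          exact ih3 b a hab.symm ⟨hubF, hxaF⟩
      · have hubS : u b ∈ S (t + 1) := hubP.resolve_left hubF
        have hSeq : S (t + 1) = {c, u b} := eq_pair hcs hubS (hcu' b) hScard
        have huaF : u a ∈ FC H S t := by
          rcases (memFC _ hua).1 with h | h
          · exact h
          · rw [hSeq] at h
            simp only [Set.mem_insert_iff, Set.mem_singleton_iff] at h
            rcases h with h | h
            · exact absurd h.symm (hcu' a)
            · exact absurd h (huinj a b hab)
        have hxbF : x b ∈ FC H S t := by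
          rcases (memFC _ hxb).1 with h | h
          · exact h
          · rw [hSeq] at h
            simp only [Set.mem_insert_iff, Set.mem_singleton_iff] at h
            rcases h with h | h
            · exact absurd h.symm (hcx' b)
            · exact absurd h.symm (hux' b)
        exact ih3 a b hab ⟨huaF, hxbF⟩
    have asym : ∀ a b, a ≠ b → u a ∈ FC H S (t + 1) → u b ∈ FC H S (t + 1) →
        u b ∉ FC H S t → False := by
      intro a b hab hua hub hubF
      have hcs := hcS a hua
      have hubS : u b ∈ S (t + 1) := (memFC _ hub).1.resolve_left hubF
      have hSeq : S (t + 1) = {c, u b} := eq_pair hcs hubS (hcu' b) hScard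
      have huaF : u a ∈ FC H S t := by
        rcases (memFC _ hua).1 with h | h
        · exact h
        · rw [hSeq] at h
          simp only [Set.mem_insert_iff, Set.mem_singleton_iff] at h
          rcases h with h | h
          · exact absurd h.symm (hcu' a)
          · exact absurd h (huinj a b hab)
      have hxbF : x b ∈ FC H S t := by
        rcases (memFC _ hub).2 (x b) (hux b) with h | h
        · exact h
        · rw [hSeq] at h
          simp only [Set.mem_insert_iff, Set.mem_singleton_iff] at h
          rcases h with h | h
          · exact absurd h.symm (hcx' b)
          · exact absurd h.symm (hux' b)
      exact ih3 a b hab ⟨huaF, hxbF⟩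
    have part2 : ∀ a b, a ≠ b → ¬(u a ∈ FC H S (t + 1) ∧ u b ∈ FC H S (t + 1)) := by
      rintro a b hab ⟨hua, hub⟩
      by_cases h : u b ∈ FC H S t
      · exact asym b a hab.symm hub hua (fun h' => ih2 a b hab ⟨h', h⟩)
      · exact asym a b hab hua hub h
    have part1 : c ∉ FC H S (t + 1) := by
      intro hc
      have hcs : c ∈ S (t + 1) := (memFC _ hc).1.resolve_left ih1
      have huP : ∀ i, u i ∈ FC H S t ∪ S (t + 1) := fun i => (memFC _ hc).2 (u i) (hcu i)
      obtain ⟨a, b, hab, haF, hbF⟩ :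
          ∃ a b : Fin 3, a ≠ b ∧ u a ∉ FC H S t ∧ u b ∉ FC H S t := by
        by_cases h0 : u 0 ∈ FC H S t
        · exact ⟨1, 2, by decide, fun h => ih2 0 1 (by decide) ⟨h0, h⟩,
            fun h => ih2 0 2 (by decide) ⟨h0, h⟩⟩
        · by_cases h1 : u 1 ∈ FC H S t
          · exact ⟨0, 2, by decide, h0, fun h => ih2 1 2 (by decide) ⟨h1, h⟩⟩
          · exact ⟨0, 1, by decide, h0, h1⟩
      have haS := (huP a).resolve_left haF
      have hbS := (huP b).resolve_left hbF
      have := ncard_ge_three hcs haS hbS (hcu' a) (hcu' b) (huinj a b hab)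
      omega
    exact ⟨part1, part2, part3⟩

lemma successful_card [Fintype W] (H : SimpleGraph W) :
    SuccessfulSearch H (Fintype.card W) := by
  refine ⟨1, fun _ => Set.univ, ?_, ?_⟩
  · intro t _ _
    simp [Set.ncard_univ]
  · ext z
    simp [FC, boundary]

lemma walk_decomp {H : SimpleGraph W} {a b : W} (p : H.Walk a b)
    (hp : p.IsPath) (hl : 2 ≤ p.length) :
    ∃ uu xx, H.Adj a uu ∧ H.Adj uu xx ∧ uu ∈ p.support ∧ xx ∈ p.support ∧
      a ≠ uu ∧ a ≠ xx ∧ uu ≠ xx ∧ uu ≠ b := by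
  cases p with
  | nil => simp at hl
  | @cons _ uu _ h q =>
    cases q with
    | nil => simp at hl
    | @cons _ xx _ h' r =>
      have hsup : (Walk.cons h (Walk.cons h' r)).support = a :: uu :: r.support := by
        simp [Walk.support_cons]
      rw [Walk.isPath_def, hsup] at hp
      simp only [List.nodup_cons, List.mem_cons, not_or] at hp
      obtain ⟨⟨hau, har⟩, hur, -⟩ := hp
      have hxr : xx ∈ r.support := r.start_mem_support
      have hbr : b ∈ r.support := r.end_mem_support
      refine ⟨uu, xx, h, h', ?_, ?_, hau, ?_, ?_, ?_⟩
      · rw [hsup]; simp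
      · rw [hsup]; simp [hxr]
      · exact fun e => har (e ▸ hxr)
      · exact fun e => hur (e ▸ hxr)
      · exact fun e => hur (e ▸ hbr)

end Aux

/-- If `G` has a vertex `v` of degree at least `3` and `G'` is a subdivision
of `G` in which every edge incident to `v` is subdivided at least once (i.e. the
corresponding path has length at least `2`), then `in(G') ≥ 3`. -/
theorem three_le_inspectionNumber_of_subdivided_branch {V W : Type} [Fintype V] [Fintype W]
    (G : SimpleGraph V) (G' : SimpleGraph W) (v : V) (hv : 3 ≤ (G.neighborSet v).ncard)
    (D : SubdivisionData G G')
    (hsub : ∀ (w : V) (h : G.Adj v w), 2 ≤ (D.walk h).length) :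
    3 ≤ inspectionNumber G' := by
  classical
  -- Step 1: three distinct neighbors of v
  obtain ⟨N, hNsub, hN3⟩ := Set.exists_subset_card_eq hv
  obtain ⟨w0, w1, w2, h01, h02, h12, rfl⟩ := Set.ncard_eq_three.mp hN3
  have hadj0 : G.Adj v w0 := hNsub (by simp)
  have hadj1 : G.Adj v w1 := hNsub (by simp)
  have hadj2 : G.Adj v w2 := hNsub (by simp)
  set w : Fin 3 → V := ![w0, w1, w2] with hw
  have hvw : ∀ i, G.Adj v (w i) := by
    intro i; fin_cases i <;> simpa [hw] using ‹_›
  have hwinj : ∀ i j : Fin 3, i ≠ j → w i ≠ w j := by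
    intro i j hij
    fin_cases i <;> fin_cases j <;> simp [hw] <;>
      first
        | exact absurd rfl hij
        | exact h01
        | exact h02
        | exact h12
        | exact fun e => h01 e.symm
        | exact fun e => h02 e.symm
        | exact fun e => h12 e.symm
  -- Step 2: for each i, decompose the walk
  have hdec : ∀ i : Fin 3, ∃ uu xx, G'.Adj (D.f v) uu ∧ G'.Adj uu xx ∧
      uu ∈ (D.walk (hvw i)).support ∧ xx ∈ (D.walk (hvw i)).support ∧
      D.f v ≠ uu ∧ D.f v ≠ xx ∧ uu ≠ xx ∧ uu ≠ D.f (w i) := by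
    intro i
    exact walk_decomp (D.walk (hvw i)) (D.isPath (hvw i)) (hsub (w i) (hvw i))
  choose u x hcu hux hmemu hmemx hcu' hcx' hux' hub using hdec
  -- Step 3: u is injective across branches
  have huinj : ∀ i j : Fin 3, i ≠ j → u i ≠ u j := by
    intro i j hij heq
    have hsym : s(v, w i) ≠ s(v, w j) := by
      intro hs
      exact hwinj i j hij (Sym2.congr_right.mp hs)
    have hrange : u i ∈ Set.range D.f :=
      D.disj (hvw i) (hvw j) hsym (u i) (hmemu i) (heq ▸ hmemu j)
    rcases D.branch (hvw i) (u i) (hmemu i) hrange with h | h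
    · exact hcu' i h.symm
    · exact hub i h
  -- Step 4: invariant argument
  have hmemT : inspectionNumber G' ∈ {k | SuccessfulSearch G' k} :=
    Nat.sInf_mem ⟨Fintype.card W, successful_card G'⟩
  by_contra hlt
  push_neg at hlt
  obtain ⟨ℓ, S, hcard, hfin⟩ := hmemT
  have hcard2 : ∀ t, 1 ≤ t → t ≤ ℓ → (S t).ncard ≤ 2 := by
    intro t h1 h2
    have := hcard t h1 h2
    omega
  have inv := spider_inv G' (D.f v) u x hcu hux hcu' hcx' hux' huinj S ℓ hcard2 ℓ le_rfl
  exact inv.1 (hfin ▸ Set.mem_univ (D.f v))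

end Inspection
end

section
/- Suppose G is a finite simple graph containing no subdivision of K_4 as a subgraph, and H is a connected subgraph of G containing distinct vertices a, b such that a and b are not adjacent in H, the graph H − {a,b} is connected, and there exists a path from a to b in the graph obtained from G by deleting all vertices of H other than a and b. Then there exists a vertex v ∈ V(H) \ {a,b} such that a and b lie in different connected components of H − v. -/
open SimpleGraph


namespace InspectionAux

variable {V : Type*} {G : SimpleGraph V}

/-- Connectivity within an allowed vertex set. -/
def Conn (G : SimpleGraph V) (t : Set V) (x y : V) : Prop :=
  ∃ w : G.Walk x y, ∀ z ∈ w.support, z ∈ t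

/-- There is a walk from `A` to `B` within `t`. -/
def Link (G : SimpleGraph V) (t A B : Set V) : Prop :=
  ∃ α ∈ A, ∃ β ∈ B, Conn G t α β

lemma Conn.mono {t t' : Set V} (h : t ⊆ t') {x y : V} (hc : Conn G t x y) : Conn G t' x y := by
  obtain ⟨w, hw⟩ := hc
  exact ⟨w, fun z hz => h (hw z hz)⟩

lemma Link.mono {t t' A B : Set V} (h : t ⊆ t') (hl : Link G t A B) : Link G t' A B := by
  obtain ⟨α, hα, β, hβ, hc⟩ := hl
  exact ⟨α, hα, β, hβ, hc.mono h⟩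

lemma Conn.trans {t : Set V} {x y z : V} (h1 : Conn G t x y) (h2 : Conn G t y z) :
    Conn G t x z := by
  obtain ⟨w1, hw1⟩ := h1
  obtain ⟨w2, hw2⟩ := h2
  refine ⟨w1.append w2, fun u hu => ?_⟩
  rw [SimpleGraph.Walk.mem_support_append_iff] at hu
  exact hu.elim (hw1 u) (hw2 u)

lemma Conn.start_mem {t : Set V} {x y : V} (h : Conn G t x y) : x ∈ t := by
  obtain ⟨w, hw⟩ := h
  exact hw x w.start_mem_support

lemma Conn.end_mem {t : Set V} {x y : V} (h : Conn G t x y) : y ∈ t := by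
  obtain ⟨w, hw⟩ := h
  exact hw y w.end_mem_support

lemma Conn.refl {t : Set V} {x : V} (h : x ∈ t) : Conn G t x x :=
  ⟨SimpleGraph.Walk.nil, by simp [h]⟩

/-- First-hit prefix: if a walk meets `K`, there is an initial segment reaching `K`
whose support meets `K` only at its final vertex. -/
lemma exists_prefix_to {x y : V} (w : G.Walk x y) (K : Set V)
    (hK : ∃ k ∈ K, k ∈ w.support) :
    ∃ k ∈ K, ∃ w' : G.Walk x k,
      (∀ z ∈ w'.support, z ∈ w.support) ∧ (∀ z ∈ w'.support, z ∈ K → z = k) := by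
  induction w with
  | nil =>
    obtain ⟨k, hk, hks⟩ := hK
    simp only [SimpleGraph.Walk.support_nil, List.mem_singleton] at hks
    subst hks
    exact ⟨k, hk, SimpleGraph.Walk.nil, by simp, by simp⟩
  | @cons u v y h p ih =>
    by_cases hu : u ∈ K
    · exact ⟨u, hu, SimpleGraph.Walk.nil, by simp, by simp⟩
    · obtain ⟨k, hk, hks⟩ := hK
      have hkp : k ∈ p.support := by
        have : k = u ∨ k ∈ p.support := by simpa using hks
        rcases this with rfl | hkp
        · exact absurd hk hu
        · exact hkp
      obtain ⟨k', hk', w', hsub, hmin⟩ := ih ⟨k, hk, hkp⟩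
      refine ⟨k', hk', SimpleGraph.Walk.cons h w', ?_, ?_⟩
      · intro z hz
        rcases (by simpa using hz : z = u ∨ z ∈ w'.support) with rfl | hz'
        · simp
        · simp [hsub z hz']
      · intro z hz hzK
        rcases (by simpa using hz : z = u ∨ z ∈ w'.support) with rfl | hz'
        · exact absurd hzK hu
        · exact hmin z hz' hzK

/-- Last-hit suffix. -/
lemma exists_suffix_from {x y : V} (w : G.Walk x y) (K : Set V)
    (hK : ∃ k ∈ K, k ∈ w.support) :
    ∃ k ∈ K, ∃ w' : G.Walk k y,
      (∀ z ∈ w'.support, z ∈ w.support) ∧ (∀ z ∈ w'.support, z ∈ K → z = k) := by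
  obtain ⟨k, hk, w', hsub, hmin⟩ := exists_prefix_to w.reverse K (by
    obtain ⟨k, hk, hks⟩ := hK
    exact ⟨k, hk, by simpa [SimpleGraph.Walk.support_reverse] using hks⟩)
  refine ⟨k, hk, w'.reverse, ?_, ?_⟩
  · intro z hz
    have := hsub z (by simpa [SimpleGraph.Walk.support_reverse] using hz)
    simpa [SimpleGraph.Walk.support_reverse] using this
  · intro z hz
    exact hmin z (by simpa [SimpleGraph.Walk.support_reverse] using hz)

end InspectionAux

namespace InspectionAux

variable {V : Type*} {G : SimpleGraph V}

lemma Conn.symm {t : Set V} {x y : V} (h : Conn G t x y) : Conn G t y x := by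
  obtain ⟨w, hw⟩ := h
  exact ⟨w.reverse, fun z hz => hw z (by simpa [SimpleGraph.Walk.support_reverse] using hz)⟩

lemma Link.symm {t A B : Set V} (h : Link G t A B) : Link G t B A := by
  obtain ⟨α, hα, β, hβ, hc⟩ := h
  exact ⟨β, hβ, α, hα, hc.symm⟩

/-- In a path ending at `k`, prefixes to earlier vertices avoid `k`. -/
lemma endpoint_not_mem_takeUntil [DecidableEq V] {α k z : V} {p : G.Walk α k} (hp : p.IsPath)
    (hz : z ∈ p.support) (hzk : z ≠ k) : k ∉ (p.takeUntil z hz).support := by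
  intro hk
  have hspec := p.take_spec hz
  have hnodup : ((p.takeUntil z hz).support ++ (p.dropUntil z hz).support.tail).Nodup := by
    rw [← SimpleGraph.Walk.support_append, hspec]
    exact hp.support_nodup
  have hdisj := List.disjoint_of_nodup_append hnodup
  have hk2 : k ∈ (p.dropUntil z hz).support.tail := by
    have hend : k ∈ (p.dropUntil z hz).support := SimpleGraph.Walk.end_mem_support _
    have : (p.dropUntil z hz).support = z :: (p.dropUntil z hz).support.tail :=
      SimpleGraph.Walk.support_eq_cons _
    rw [this] at hend
    rcases List.mem_cons.mp hend with h' | h'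
    · exact absurd h'.symm hzk
    · exact h'
  exact hdisj hk hk2

/-- Workhorse: given no `A`–`B` link avoiding `K`, any `A`–`B` link within `t ⊆ s`
yields an `A`–`K` link staying in the `A`-side reach together with the hit vertex. -/
lemma link_to_cut [DecidableEq V] {s K A B : Set V} (hno : ¬ Link G (s \ K) A B) {t : Set V}
    (ht : t ⊆ s) (hl : Link G t A B) :
    ∃ k ∈ K, k ∈ t ∧ ∃ α ∈ A,
      Conn G (({x | x ∈ s ∧ x ∉ K ∧ ∃ a ∈ A, Conn G (s \ K) a x} ∩ t) ∪ {k}) α k := by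
  classical
  obtain ⟨α, hα, β, hβ, w0, hw0⟩ := hl
  -- the walk must hit K
  have hhit : ∃ k ∈ K, k ∈ w0.support := by
    by_contra hcon
    push_neg at hcon
    exact hno ⟨α, hα, β, hβ, w0, fun z hz => ⟨ht (hw0 z hz), fun hzK => hcon z hzK hz⟩⟩
  obtain ⟨k, hkK, w1, hsub1, hmin1⟩ := exists_prefix_to w0 K hhit
  -- make it a path
  set p := w1.bypass with hp
  have hppath : p.IsPath := w1.bypass_isPath
  have hsubp : ∀ z ∈ p.support, z ∈ w0.support := fun z hz =>
    hsub1 z (SimpleGraph.Walk.support_bypass_subset _ hz)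
  have hminp : ∀ z ∈ p.support, z ∈ K → z = k := fun z hz =>
    hmin1 z (SimpleGraph.Walk.support_bypass_subset _ hz)
  refine ⟨k, hkK, hw0 k (hsub1 k (SimpleGraph.Walk.end_mem_support _)), α, hα, p, ?_⟩
  intro z hz
  by_cases hzk : z = k
  · right; simp [hzk]
  · left
    have hzK : z ∉ K := fun hzK => hzk (hminp z hz hzK)
    have hzt : z ∈ t := hw0 z (hsubp z hz)
    refine ⟨⟨ht hzt, hzK, α, hα, ?_⟩, hzt⟩
    -- the prefix of p up to z stays in s \ K
    refine ⟨p.takeUntil z hz, fun y hy => ?_⟩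
    have hyp : y ∈ p.support := SimpleGraph.Walk.support_takeUntil_subset _ hz hy
    have hyk : y ≠ k := by
      intro rfl'
      exact endpoint_not_mem_takeUntil hppath hz hzk (rfl' ▸ hy)
    exact ⟨ht (hw0 y (hsubp y hyp)), fun hyK => hyk (hminp y hyp hyK)⟩

/-- Extract a single `A`–`B` edge from a linking walk when `s ⊆ A ∪ B`. -/
lemma exists_edge_aux {s A B : Set V} (hsub : ∀ x ∈ s, x ∈ A ∨ x ∈ B)
    (hdisj : ∀ c, c ∈ A → c ∈ B → c ∉ s) {t : Set V} (hts : t ⊆ s) :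
    ∀ {α β : V} (w : G.Walk α β), α ∈ A → β ∈ B → (∀ z ∈ w.support, z ∈ t) →
    ∃ p q, p ∈ A ∧ q ∈ B ∧ p ∈ t ∧ q ∈ t ∧ G.Adj p q := by
  intro α β w
  induction w with
  | nil =>
    intro hα hβ hsup
    exact absurd (hts (hsup _ (SimpleGraph.Walk.start_mem_support _))) (hdisj _ hα hβ)
  | @cons u γ β h p ih =>
    intro hα hβ hsup
    have hγt : γ ∈ t := hsup γ (by simp)
    rcases hsub γ (hts hγt) with hγA | hγB
    · exact ih hγA hβ (fun z hz => hsup z (by simp [hz]))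
    · exact ⟨u, γ, hα, hγB, hsup u (by simp), hγt, h⟩

lemma single_edge_path {p q : V} (h : G.Adj p q) :
    (SimpleGraph.Walk.cons h SimpleGraph.Walk.nil).IsPath := by
  simp [SimpleGraph.Walk.isPath_def, h.ne]

/-- Local Menger theorem for two disjoint `A`–`B` paths. -/
theorem menger2 (G : SimpleGraph V) : ∀ (n : ℕ) (s A B : Set V), s.Finite → s.ncard ≤ n →
    (∀ v ∈ s, Link G (s \ {v}) A B) → Link G s A B →
    ∃ (α₁ β₁ α₂ β₂ : V) (p₁ : G.Walk α₁ β₁) (p₂ : G.Walk α₂ β₂),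
      α₁ ∈ A ∧ β₁ ∈ B ∧ α₂ ∈ A ∧ β₂ ∈ B ∧ p₁.IsPath ∧ p₂.IsPath ∧
      (∀ z ∈ p₁.support, z ∈ s) ∧ (∀ z ∈ p₂.support, z ∈ s) ∧
      (∀ z ∈ p₁.support, z ∉ p₂.support) := by
  intro n
  induction n with
  | zero =>
    intro s A B hfin hcard hAB hL
    obtain ⟨α, _, β, _, hc⟩ := hL
    have hαs : α ∈ s := hc.start_mem
    have : s = ∅ := by
      have := Nat.le_zero.mp hcard
      rwa [Set.ncard_eq_zero hfin] at this
    simp [this] at hαs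
  | succ n ih =>
    intro s A B hfin hcard hAB hL
    classical
    -- Case: some common A ∩ B vertex in s
    by_cases h1 : ∃ c, c ∈ A ∧ c ∈ B ∧ c ∈ s
    · obtain ⟨c, hcA, hcB, hcs⟩ := h1
      obtain ⟨α, hα, β, hβ, w, hw⟩ := hAB c hcs
      refine ⟨α, β, c, c, w.bypass, SimpleGraph.Walk.nil, hα, hβ, hcA, hcB,
        w.bypass_isPath, by simp [SimpleGraph.Walk.isPath_def], ?_, by simpa, ?_⟩
      · exact fun z hz => (hw z (SimpleGraph.Walk.support_bypass_subset _ hz)).1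
      · intro z hz
        have := (hw z (SimpleGraph.Walk.support_bypass_subset _ hz)).2
        simpa using this
    push_neg at h1
    -- Case I: a removable vertex
    by_cases hI : ∃ z ∈ s, ∀ v ∈ s \ {z}, Link G ((s \ {z}) \ {v}) A B
    · obtain ⟨z, hzs, hz⟩ := hI
      have hcard' : (s \ {z}).ncard ≤ n := by
        have := Set.ncard_diff_singleton_lt_of_mem hzs hfin
        omega
      obtain ⟨α₁, β₁, α₂, β₂, p₁, p₂, h⟩ :=
        ih (s \ {z}) A B (hfin.subset Set.diff_subset) hcard' hz (hAB z hzs)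
      exact ⟨α₁, β₁, α₂, β₂, p₁, p₂, h.1, h.2.1, h.2.2.1, h.2.2.2.1, h.2.2.2.2.1,
        h.2.2.2.2.2.1, fun z' hz' => (h.2.2.2.2.2.2.1 z' hz').1,
        fun z' hz' => (h.2.2.2.2.2.2.2.1 z' hz').1, h.2.2.2.2.2.2.2.2⟩
    push_neg at hI
    -- Case II.b : s ⊆ A ∪ B
    by_cases hsub : ∀ x ∈ s, x ∈ A ∨ x ∈ B
    · have hdisj : ∀ c, c ∈ A → c ∈ B → c ∉ s := fun c hA hB hs => h1 c hA hB hs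
      obtain ⟨α, hα, β, hβ, w, hw⟩ := hL
      obtain ⟨a1, b1, ha1, hb1, ha1t, hb1t, hadj1⟩ :=
        exists_edge_aux hsub hdisj (le_refl s) w hα hβ hw
      have ha1s : a1 ∈ s := ha1t
      obtain ⟨α', hα', β', hβ', w', hw'⟩ := hAB a1 ha1s
      obtain ⟨a2, b2, ha2, hb2, ha2t, hb2t, hadj2⟩ :=
        exists_edge_aux hsub hdisj (Set.diff_subset) w' hα' hβ' hw'
      have ha2ne : a2 ≠ a1 := by
        intro h'; rw [h'] at ha2t; exact ha2t.2 rfl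
      by_cases hbb : b2 = b1
      · subst hbb
        obtain ⟨α'', hα'', β'', hβ'', w'', hw''⟩ := hAB b2 hb1t
        obtain ⟨a3, b3, ha3, hb3, ha3t, hb3t, hadj3⟩ :=
          exists_edge_aux hsub hdisj (Set.diff_subset) w'' hα'' hβ'' hw''
        have hb3ne : b3 ≠ b2 := by
          intro h'; rw [h'] at hb3t; exact hb3t.2 rfl
        by_cases haa : a3 = a1
        · subst haa
          -- use (a2, b2) and (a3, b3)
          refine ⟨a2, b2, a3, b3, SimpleGraph.Walk.cons hadj2 SimpleGraph.Walk.nil,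
            SimpleGraph.Walk.cons hadj3 SimpleGraph.Walk.nil, ha2, hb2, ha3, hb3,
            single_edge_path hadj2, single_edge_path hadj3, ?_, ?_, ?_⟩
          · intro z hz; simp at hz
            rcases hz with rfl | rfl
            · exact ha2t.1
            · exact hb1t
          · intro z hz; simp at hz
            rcases hz with rfl | rfl
            · exact ha3t.1
            · exact hb3t.1
          · intro z hz hz'; simp at hz hz'
            rcases hz with rfl | rfl <;> rcases hz' with rfl | rfl
            · exact ha2ne rfl
            · exact h1 z ha2 hb3 ha2t.1
            · exact h1 z ha3 hb2 hb1t
            · exact hb3ne rfl.symm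
        · -- use (a1, b1) and (a3, b3)
          refine ⟨a1, b2, a3, b3, SimpleGraph.Walk.cons hadj1 SimpleGraph.Walk.nil,
            SimpleGraph.Walk.cons hadj3 SimpleGraph.Walk.nil, ha1, hb2, ha3, hb3,
            single_edge_path hadj1, single_edge_path hadj3, ?_, ?_, ?_⟩
          · intro z hz; simp at hz
            rcases hz with rfl | rfl
            · exact ha1s
            · exact hb1t
          · intro z hz; simp at hz
            rcases hz with rfl | rfl
            · exact ha3t.1
            · exact hb3t.1
          · intro z hz hz'; simp at hz hz'
            rcases hz with rfl | rfl <;> rcases hz' with rfl | rfl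
            · exact haa rfl.symm
            · exact h1 z ha1 hb3 ha1s
            · exact h1 z ha3 hb2 hb1t
            · exact hb3ne rfl.symm
      · -- use (a1, b1) and (a2, b2)
        refine ⟨a1, b1, a2, b2, SimpleGraph.Walk.cons hadj1 SimpleGraph.Walk.nil,
          SimpleGraph.Walk.cons hadj2 SimpleGraph.Walk.nil, ha1, hb1, ha2, hb2,
          single_edge_path hadj1, single_edge_path hadj2, ?_, ?_, ?_⟩
        · intro z hz; simp at hz
          rcases hz with rfl | rfl
          · exact ha1s
          · exact hb1t
        · intro z hz; simp at hz
          rcases hz with rfl | rfl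
          · exact ha2t.1
          · exact hb2t.1
        · intro z hz hz'; simp at hz hz'
          rcases hz with rfl | rfl <;> rcases hz' with rfl | rfl
          · exact ha2ne rfl.symm
          · exact h1 z ha1 hb2 ha1s
          · exact h1 z ha2 hb1 hb1t
          · exact hbb rfl.symm
    · -- Case II.a : there is a vertex z outside A ∪ B
      push_neg at hsub
      obtain ⟨z, hzs, hzA, hzB⟩ := hsub
      obtain ⟨u, hu, hnoL⟩ := hI z hzs
      have hus : u ∈ s := hu.1
      have huz : u ≠ z := by simpa using hu.2
      letI := Classical.decEq V
      set K : Set V := {z, u} with hK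
      have hKs : K ⊆ s := by
        intro x hx
        rcases hx with rfl | rfl
        · exact hzs
        · exact hus
      have hno : ¬ Link G (s \ K) A B := by
        rw [hK, ← Set.singleton_union, ← Set.diff_diff]
        exact hnoL
      have hnoB : ¬ Link G (s \ K) B A := fun h => hno h.symm
      set XA : Set V := {x | x ∈ s ∧ x ∉ K ∧ ∃ a ∈ A, Conn G (s \ K) a x} with hXA
      set XB : Set V := {x | x ∈ s ∧ x ∉ K ∧ ∃ b ∈ B, Conn G (s \ K) b x} with hXB
      have hXAs : XA ⊆ s := fun x hx => hx.1
      have hXBs : XB ⊆ s := fun x hx => hx.1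
      have hXAK : ∀ x ∈ XA, x ∉ K := fun x hx => hx.2.1
      have hXBK : ∀ x ∈ XB, x ∉ K := fun x hx => hx.2.1
      have hXAB : ∀ x, x ∈ XA → x ∈ XB → False := by
        intro x hx1 hx2
        obtain ⟨-, -, a, ha, hca⟩ := hx1
        obtain ⟨-, -, b, hb, hcb⟩ := hx2
        exact hno ⟨a, ha, b, hb, hca.trans hcb.symm⟩
      -- the A-side instance
      have hypA : ∀ v ∈ XA ∪ K, Link G ((XA ∪ K) \ {v}) A K := by
        intro v hv
        have hvs : v ∈ s := by
          rcases hv with hv | hv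
          · exact hXAs hv
          · exact hKs hv
        obtain ⟨k, hkK, hkt, α, hα, hc⟩ := link_to_cut hno Set.diff_subset (hAB v hvs)
        refine ⟨α, hα, k, hkK, hc.mono ?_⟩
        intro x hx
        rcases hx with ⟨hx1, hx2⟩ | rfl
        · exact ⟨Or.inl hx1, fun h => hx2.2 (by simpa using h)⟩
        · exact ⟨Or.inr hkK, fun h => hkt.2 (by simpa using h)⟩
      have linkA : Link G (XA ∪ K) A K := by
        obtain ⟨k, hkK, hkt, α, hα, hc⟩ := link_to_cut hno (le_refl s) hL
        refine ⟨α, hα, k, hkK, hc.mono ?_⟩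
        intro x hx
        rcases hx with ⟨hx1, _⟩ | rfl
        · exact Or.inl hx1
        · exact Or.inr hkK
      -- the B-side instance
      have hypB : ∀ v ∈ XB ∪ K, Link G ((XB ∪ K) \ {v}) B K := by
        intro v hv
        have hvs : v ∈ s := by
          rcases hv with hv | hv
          · exact hXBs hv
          · exact hKs hv
        obtain ⟨k, hkK, hkt, β, hβ, hc⟩ := link_to_cut hnoB Set.diff_subset (hAB v hvs).symm
        refine ⟨β, hβ, k, hkK, hc.mono ?_⟩
        intro x hx
        rcases hx with ⟨hx1, hx2⟩ | rfl
        · exact ⟨Or.inl hx1, fun h => hx2.2 (by simpa using h)⟩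
        · exact ⟨Or.inr hkK, fun h => hkt.2 (by simpa using h)⟩
      have linkB : Link G (XB ∪ K) B K := by
        obtain ⟨k, hkK, hkt, β, hβ, hc⟩ := link_to_cut hnoB (le_refl s) hL.symm
        refine ⟨β, hβ, k, hkK, hc.mono ?_⟩
        intro x hx
        rcases hx with ⟨hx1, _⟩ | rfl
        · exact Or.inl hx1
        · exact Or.inr hkK
      -- cardinalities
      have hssA : XA ∪ K ⊆ s := Set.union_subset hXAs hKs
      have hssB : XB ∪ K ⊆ s := Set.union_subset hXBs hKs
      obtain ⟨α1', hα1A, β1', hβ1B, hc1⟩ := hL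
      have hβ1s : β1' ∈ s := hc1.end_mem
      have hα1s : α1' ∈ s := hc1.start_mem
      obtain ⟨α2', hα2A, β2', hβ2B, hc2⟩ := hAB β1' hβ1s
      have hβ2 : β2' ∈ s \ {β1'} := hc2.end_mem
      obtain ⟨α3', hα3A, β3', hβ3B, hc3⟩ := hAB α1' hα1s
      have hα3 : α3' ∈ s \ {α1'} := hc3.start_mem
      have hβ0 : ∃ β0, β0 ∈ B ∧ β0 ∈ s ∧ β0 ∉ K := by
        by_cases h : β1' = u
        · refine ⟨β2', hβ2B, hβ2.1, fun hmem => ?_⟩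
          rcases hmem with rfl | rfl
          · exact hzB hβ2B
          · exact hβ2.2 (by simp [h])
        · refine ⟨β1', hβ1B, hβ1s, fun hmem => ?_⟩
          rcases hmem with rfl | rfl
          · exact hzB hβ1B
          · exact h rfl
      have hα0 : ∃ α0, α0 ∈ A ∧ α0 ∈ s ∧ α0 ∉ K := by
        by_cases h : α1' = u
        · refine ⟨α3', hα3A, hα3.1, fun hmem => ?_⟩
          rcases hmem with rfl | rfl
          · exact hzA hα3A
          · exact hα3.2 (by simp [h])
        · refine ⟨α1', hα1A, hα1s, fun hmem => ?_⟩
          rcases hmem with rfl | rfl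
          · exact hzA hα1A
          · exact h rfl
      obtain ⟨β0, hβ0B, hβ0s, hβ0K⟩ := hβ0
      obtain ⟨α0, hα0A, hα0s, hα0K⟩ := hα0
      have hβ0XA : β0 ∉ XA := by
        intro hmem
        obtain ⟨-, -, a, ha, hca⟩ := hmem
        exact hno ⟨a, ha, β0, hβ0B, hca⟩
      have hα0XB : α0 ∉ XB := by
        intro hmem
        obtain ⟨-, -, b, hb, hcb⟩ := hmem
        exact hnoB ⟨b, hb, α0, hα0A, hcb⟩
      have hcardA : (XA ∪ K).ncard ≤ n := by
        have hlt : (XA ∪ K).ncard < s.ncard := by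
          refine Set.ncard_lt_ncard ⟨hssA, fun hsup => ?_⟩ hfin
          rcases hsup hβ0s with h | h
          · exact hβ0XA h
          · exact hβ0K h
        omega
      have hcardB : (XB ∪ K).ncard ≤ n := by
        have hlt : (XB ∪ K).ncard < s.ncard := by
          refine Set.ncard_lt_ncard ⟨hssB, fun hsup => ?_⟩ hfin
          rcases hsup hα0s with h | h
          · exact hα0XB h
          · exact hα0K h
        omega
      obtain ⟨αq1, k1, αq2, k2, q1, q2, hαq1, hk1K, hαq2, hk2K, hq1p, hq2p,
        hq1s, hq2s, hqd⟩ := ih (XA ∪ K) A K (hfin.subset hssA) hcardA hypA linkA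
      obtain ⟨βr1, k1', βr2, k2', r1', r2', hβr1, hk1K', hβr2, hk2K', hr1p, hr2p,
        hr1s, hr2s, hrd⟩ := ih (XB ∪ K) B K (hfin.subset hssB) hcardB hypB linkB
      have hk12 : k1 ≠ k2 := by
        intro h
        exact hqd k1 q1.end_mem_support (h ▸ q2.end_mem_support)
      have hk12' : k1' ≠ k2' := by
        intro h
        exact hrd k1' r1'.end_mem_support (h ▸ r2'.end_mem_support)
      -- gluing
      have glue : ∀ (ka kb : V), ka ∈ K → kb ∈ K → ka ≠ kb → (∀ x ∈ K, x = ka ∨ x = kb) →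
          ∀ (a1 b1 a2 b2 : V) (q1 : G.Walk a1 ka) (q2 : G.Walk a2 kb)
            (r1 : G.Walk ka b1) (r2 : G.Walk kb b2),
          a1 ∈ A → a2 ∈ A → b1 ∈ B → b2 ∈ B →
          q1.IsPath → q2.IsPath → r1.IsPath → r2.IsPath →
          (∀ x ∈ q1.support, x ∈ XA ∪ K) → (∀ x ∈ q2.support, x ∈ XA ∪ K) →
          (∀ x ∈ r1.support, x ∈ XB ∪ K) → (∀ x ∈ r2.support, x ∈ XB ∪ K) →
          (∀ x ∈ q1.support, x ∉ q2.support) → (∀ x ∈ r1.support, x ∉ r2.support) →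
          ∃ (α₁ β₁ α₂ β₂ : V) (p₁ : G.Walk α₁ β₁) (p₂ : G.Walk α₂ β₂),
            α₁ ∈ A ∧ β₁ ∈ B ∧ α₂ ∈ A ∧ β₂ ∈ B ∧ p₁.IsPath ∧ p₂.IsPath ∧
            (∀ z ∈ p₁.support, z ∈ s) ∧ (∀ z ∈ p₂.support, z ∈ s) ∧
            (∀ z ∈ p₁.support, z ∉ p₂.support) := by
        intro ka kb hkaK hkbK hkab hKset a1 b1 a2 b2 q1 q2 r1 r2 ha1 ha2 hb1 hb2
          hq1p hq2p hr1p hr2p hq1s hq2s hr1s hr2s hqd hrd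
        have hq1' : ∀ x ∈ q1.support, x ∈ XA ∪ {ka} := by
          intro x hx
          rcases hq1s x hx with h | h
          · exact Or.inl h
          · rcases hKset x h with rfl | rfl
            · exact Or.inr rfl
            · exact absurd (q2.end_mem_support) (hqd x hx)
        have hq2' : ∀ x ∈ q2.support, x ∈ XA ∪ {kb} := by
          intro x hx
          rcases hq2s x hx with h | h
          · exact Or.inl h
          · rcases hKset x h with rfl | rfl
            · exact absurd hx (hqd x (q1.end_mem_support))
            · exact Or.inr rfl
        have hr1' : ∀ x ∈ r1.support, x ∈ XB ∪ {ka} := by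
          intro x hx
          rcases hr1s x hx with h | h
          · exact Or.inl h
          · rcases hKset x h with rfl | rfl
            · exact Or.inr rfl
            · exact absurd (r2.start_mem_support) (hrd x hx)
        have hr2' : ∀ x ∈ r2.support, x ∈ XB ∪ {kb} := by
          intro x hx
          rcases hr2s x hx with h | h
          · exact Or.inl h
          · rcases hKset x h with rfl | rfl
            · exact absurd hx (hrd x (r1.start_mem_support))
            · exact Or.inr rfl
        -- the two glued walks
        have hp1 : (q1.append r1).IsPath := by
          rw [SimpleGraph.Walk.isPath_def, SimpleGraph.Walk.support_append]
          refine List.Nodup.append hq1p.support_nodup ?_ ?_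
          · have := hr1p.support_nodup
            rw [SimpleGraph.Walk.support_eq_cons] at this
            exact this.of_cons
          · intro x hx hx'
            have hxr : x ∈ r1.support := List.mem_of_mem_tail hx'
            have hxka : x ≠ ka := by
              rintro rfl
              have := hr1p.support_nodup
              rw [SimpleGraph.Walk.support_eq_cons] at this
              exact (List.nodup_cons.mp this).1 hx'
            rcases hq1' x hx with h | h
            · rcases hr1' x hxr with h' | h'
              · exact hXAB x h h'
              · exact hxka (by simpa using h')
            · exact hxka (by simpa using h)
        have hp2 : (q2.append r2).IsPath := by
          rw [SimpleGraph.Walk.isPath_def, SimpleGraph.Walk.support_append]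
          refine List.Nodup.append hq2p.support_nodup ?_ ?_
          · have := hr2p.support_nodup
            rw [SimpleGraph.Walk.support_eq_cons] at this
            exact this.of_cons
          · intro x hx hx'
            have hxr : x ∈ r2.support := List.mem_of_mem_tail hx'
            have hxkb : x ≠ kb := by
              rintro rfl
              have := hr2p.support_nodup
              rw [SimpleGraph.Walk.support_eq_cons] at this
              exact (List.nodup_cons.mp this).1 hx'
            rcases hq2' x hx with h | h
            · rcases hr2' x hxr with h' | h'
              · exact hXAB x h h'
              · exact hxkb (by simpa using h')
            · exact hxkb (by simpa using h)
        refine ⟨a1, b1, a2, b2, q1.append r1, q2.append r2, ha1, hb1, ha2, hb2,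
          hp1, hp2, ?_, ?_, ?_⟩
        · intro x hx
          rcases (SimpleGraph.Walk.mem_support_append_iff _ _).mp hx with h | h
          · exact hssA (hq1s x h)
          · exact hssB (hr1s x h)
        · intro x hx
          rcases (SimpleGraph.Walk.mem_support_append_iff _ _).mp hx with h | h
          · exact hssA (hq2s x h)
          · exact hssB (hr2s x h)
        · intro x hx hx'
          rcases (SimpleGraph.Walk.mem_support_append_iff _ _).mp hx with h | h <;>
            rcases (SimpleGraph.Walk.mem_support_append_iff _ _).mp hx' with h' | h'
          · exact hqd x h h'
          · rcases hq1' x h with h1 | h1 <;> rcases hr2' x h' with h2 | h2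
            · exact hXAB x h1 h2
            · have hx2 : x = kb := by simpa using h2
              exact hXAK x h1 (by rw [hx2]; exact hkbK)
            · have hx1 : x = ka := by simpa using h1
              exact hXBK x h2 (by rw [hx1]; exact hkaK)
            · have hx1 : x = ka := by simpa using h1
              have hx2 : x = kb := by simpa using h2
              exact hkab (hx1.symm.trans hx2)
          · rcases hq2' x h' with h1 | h1 <;> rcases hr1' x h with h2 | h2
            · exact hXAB x h1 h2
            · have hx2 : x = ka := by simpa using h2
              exact hXAK x h1 (by rw [hx2]; exact hkaK)
            · have hx1 : x = kb := by simpa using h1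
              exact hXBK x h2 (by rw [hx1]; exact hkbK)
            · have hx1 : x = kb := by simpa using h1
              have hx2 : x = ka := by simpa using h2
              exact hkab (hx2.symm.trans hx1)
          · exact hrd x h h'
      -- pair up the endpoints
      have hKset12 : ∀ x ∈ K, x = k1 ∨ x = k2 := by
        have h1 : k1 = z ∨ k1 = u := hk1K
        have h2 : k2 = z ∨ k2 = u := hk2K
        intro x hx
        have hx' : x = z ∨ x = u := hx
        rcases hx' with rfl | rfl <;> rcases h1 with h1 | h1 <;> rcases h2 with h2 | h2
        · exact Or.inl h1.symm
        · exact Or.inl h1.symm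
        · exact Or.inr h2.symm
        · exact absurd (h1.trans h2.symm) hk12
        · exact absurd (h1.trans h2.symm) hk12
        · exact Or.inr h2.symm
        · exact Or.inl h1.symm
        · exact Or.inl h1.symm
      have hpairs : (k1 = k1' ∧ k2 = k2') ∨ (k1 = k2' ∧ k2 = k1') := by
        rcases hKset12 k1' hk1K' with h | h <;> rcases hKset12 k2' hk2K' with h' | h'
        · exact absurd (h ▸ h' ▸ rfl : k1' = k2') hk12'
        · exact Or.inl ⟨h.symm, h'.symm⟩
        · exact Or.inr ⟨h'.symm, h.symm⟩
        · exact absurd (h ▸ h' ▸ rfl : k1' = k2') hk12'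
      rcases hpairs with ⟨h1', h2'⟩ | ⟨h1', h2'⟩
      · subst h1'; subst h2'
        exact glue k1 k2 hk1K hk2K hk12 hKset12 αq1 βr1 αq2 βr2 q1 q2
          r1'.reverse r2'.reverse hαq1 hαq2 hβr1 hβr2 hq1p hq2p hr1p.reverse hr2p.reverse
          hq1s hq2s
          (fun x hx => hr1s x (by simpa [SimpleGraph.Walk.support_reverse] using hx))
          (fun x hx => hr2s x (by simpa [SimpleGraph.Walk.support_reverse] using hx))
          hqd
          (fun x hx hx' => hrd x (by simpa [SimpleGraph.Walk.support_reverse] using hx)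
            (by simpa [SimpleGraph.Walk.support_reverse] using hx'))
      · subst h1'; subst h2'
        exact glue k1 k2 hk1K hk2K hk12 hKset12 αq1 βr2 αq2 βr1 q1 q2
          r2'.reverse r1'.reverse hαq1 hαq2 hβr2 hβr1 hq1p hq2p hr2p.reverse hr1p.reverse
          hq1s hq2s
          (fun x hx => hr2s x (by simpa [SimpleGraph.Walk.support_reverse] using hx))
          (fun x hx => hr1s x (by simpa [SimpleGraph.Walk.support_reverse] using hx))
          hqd
          (fun x hx hx' => hrd x (by simpa [SimpleGraph.Walk.support_reverse] using hx')
            (by simpa [SimpleGraph.Walk.support_reverse] using hx))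

end InspectionAux

namespace InspectionAux

open SimpleGraph

variable {V : Type*} {G : SimpleGraph V}

/-- Lift a walk of `G` into a subgraph containing it. -/
def liftWalk {K : G.Subgraph} : ∀ {x y : V} (p : G.Walk x y)
    (hs : ∀ z ∈ p.support, z ∈ K.verts) (ha : ∀ a b, s(a, b) ∈ p.edges → K.Adj a b),
    K.coe.Walk ⟨x, hs x p.start_mem_support⟩ ⟨y, hs y p.end_mem_support⟩
  | _, _, SimpleGraph.Walk.nil, _, _ => SimpleGraph.Walk.nil
  | _, _, SimpleGraph.Walk.cons h p, hs, ha =>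
      SimpleGraph.Walk.cons (ha _ _ (by simp))
        (liftWalk p (fun z hz => hs z (by simp [hz])) (fun a b hab => ha a b (by simp [hab])))

lemma liftWalk_support {K : G.Subgraph} {x y : V} (p : G.Walk x y)
    (hs : ∀ z ∈ p.support, z ∈ K.verts) (ha : ∀ a b, s(a, b) ∈ p.edges → K.Adj a b) :
    (liftWalk p hs ha).support.map Subtype.val = p.support := by
  induction p with
  | nil => rfl
  | cons h p ih => exact congrArg (List.cons _) (ih _ _)

lemma liftWalk_edges {K : G.Subgraph} {x y : V} (p : G.Walk x y)
    (hs : ∀ z ∈ p.support, z ∈ K.verts) (ha : ∀ a b, s(a, b) ∈ p.edges → K.Adj a b) :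
    (liftWalk p hs ha).edges.map (Sym2.map Subtype.val) = p.edges := by
  induction p with
  | nil => rfl
  | cons h p ih => exact congrArg (List.cons _) (ih _ _)

lemma liftWalk_isPath {K : G.Subgraph} {x y : V} {p : G.Walk x y}
    (hs : ∀ z ∈ p.support, z ∈ K.verts) (ha : ∀ a b, s(a, b) ∈ p.edges → K.Adj a b)
    (hp : p.IsPath) : (liftWalk p hs ha).IsPath := by
  rw [SimpleGraph.Walk.isPath_def]
  have := hp.support_nodup
  rw [← liftWalk_support p hs ha] at this
  exact this.of_map

lemma mem_liftWalk_support {K : G.Subgraph} {x y : V} {p : G.Walk x y}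
    {hs : ∀ z ∈ p.support, z ∈ K.verts} {ha : ∀ a b, s(a, b) ∈ p.edges → K.Adj a b}
    {w : K.verts} : w ∈ (liftWalk p hs ha).support ↔ (w : V) ∈ p.support := by
  rw [← liftWalk_support p hs ha]
  constructor
  · intro h
    exact List.mem_map.mpr ⟨w, h, rfl⟩
  · intro h
    obtain ⟨w', hw', hww⟩ := List.mem_map.mp h
    exact (Subtype.ext hww : w' = w) ▸ hw'

lemma mem_liftWalk_edges {K : G.Subgraph} {x y : V} {p : G.Walk x y}
    {hs : ∀ z ∈ p.support, z ∈ K.verts} {ha : ∀ a b, s(a, b) ∈ p.edges → K.Adj a b}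
    {c d : K.verts} (h : s((c : V), (d : V)) ∈ p.edges) :
    s(c, d) ∈ (liftWalk p hs ha).edges := by
  rw [← liftWalk_edges p hs ha] at h
  obtain ⟨e', he', hee⟩ := List.mem_map.mp h
  have : e' = s(c, d) := by
    have hinj : Function.Injective (Sym2.map (Subtype.val : K.verts → V)) :=
      Sym2.map.injective Subtype.val_injective
    apply hinj
    rw [hee]
    rfl
  exact this ▸ he'

/-- Lift via `toSubgraph ≤ K`. -/
def liftWalkLe {K : G.Subgraph} {x y : V} (w : G.Walk x y) (hle : w.toSubgraph ≤ K) :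
    K.coe.Walk ⟨x, hle.1 w.start_mem_verts_toSubgraph⟩ ⟨y, hle.1 w.end_mem_verts_toSubgraph⟩ :=
  liftWalk w (fun z hz => hle.1 (w.mem_verts_toSubgraph.mpr hz))
    (fun a b hab => hle.2 (SimpleGraph.Subgraph.mem_edgeSet.mp (w.mem_edges_toSubgraph.mpr hab)))

end InspectionAux

namespace InspectionAux

open SimpleGraph

variable {V : Type*} {G : SimpleGraph V}

lemma mem_support_reverse' {u v w : V} {p : G.Walk u v} :
    w ∈ p.reverse.support ↔ w ∈ p.support := by
  simp [SimpleGraph.Walk.support_reverse]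

set_option maxHeartbeats 2000000 in
lemma k4_of_six {a b x y : V}
    (hax : a ≠ x) (hay : a ≠ y) (hbx : b ≠ x) (hby : b ≠ y) (hab : a ≠ b) (hxy : x ≠ y)
    (Pab : G.Walk a b) (Pax : G.Walk a x) (Pay : G.Walk a y)
    (Pxb : G.Walk x b) (Pyb : G.Walk y b) (Pxy : G.Walk x y)
    (hPab : Pab.IsPath) (hPax : Pax.IsPath) (hPay : Pay.IsPath)
    (hPxb : Pxb.IsPath) (hPyb : Pyb.IsPath) (hPxy : Pxy.IsPath)
    (nab1 : x ∉ Pab.support) (nab2 : y ∉ Pab.support)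
    (nax1 : b ∉ Pax.support) (nax2 : y ∉ Pax.support)
    (nay1 : b ∉ Pay.support) (nay2 : x ∉ Pay.support)
    (nxb1 : a ∉ Pxb.support) (nxb2 : y ∉ Pxb.support)
    (nyb1 : a ∉ Pyb.support) (nyb2 : x ∉ Pyb.support)
    (nxy1 : a ∉ Pxy.support) (nxy2 : b ∉ Pxy.support)
    (i1 : ∀ z ∈ Pab.support, z ∈ Pax.support → z = a)
    (i2 : ∀ z ∈ Pab.support, z ∈ Pay.support → z = a)
    (i3 : ∀ z ∈ Pab.support, z ∈ Pxb.support → z = b)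
    (i4 : ∀ z ∈ Pab.support, z ∈ Pyb.support → z = b)
    (i5 : ∀ z ∈ Pab.support, z ∉ Pxy.support)
    (i6 : ∀ z ∈ Pax.support, z ∈ Pay.support → z = a)
    (i7 : ∀ z ∈ Pax.support, z ∈ Pxb.support → z = x)
    (i8 : ∀ z ∈ Pax.support, z ∉ Pyb.support)
    (i9 : ∀ z ∈ Pax.support, z ∈ Pxy.support → z = x)
    (i10 : ∀ z ∈ Pay.support, z ∉ Pxb.support)
    (i11 : ∀ z ∈ Pay.support, z ∈ Pyb.support → z = y)
    (i12 : ∀ z ∈ Pay.support, z ∈ Pxy.support → z = y)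
    (i13 : ∀ z ∈ Pxb.support, z ∈ Pyb.support → z = b)
    (i14 : ∀ z ∈ Pxb.support, z ∈ Pxy.support → z = x)
    (i15 : ∀ z ∈ Pyb.support, z ∈ Pxy.support → z = y) :
    ∃ K : G.Subgraph, Inspection.IsSubdivision (⊤ : SimpleGraph (Fin 4)) K.coe := by
  classical
  set K : G.Subgraph := Pab.toSubgraph ⊔ Pax.toSubgraph ⊔ Pay.toSubgraph ⊔ Pxb.toSubgraph ⊔
    Pyb.toSubgraph ⊔ Pxy.toSubgraph with hKdef
  have l1 : Pab.toSubgraph ≤ K :=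
    le_sup_of_le_left (le_sup_of_le_left (le_sup_of_le_left (le_sup_of_le_left le_sup_left)))
  have l2 : Pax.toSubgraph ≤ K :=
    le_sup_of_le_left (le_sup_of_le_left (le_sup_of_le_left (le_sup_of_le_left le_sup_right)))
  have l3 : Pay.toSubgraph ≤ K :=
    le_sup_of_le_left (le_sup_of_le_left (le_sup_of_le_left le_sup_right))
  have l4 : Pxb.toSubgraph ≤ K := le_sup_of_le_left (le_sup_of_le_left le_sup_right)
  have l5 : Pyb.toSubgraph ≤ K := le_sup_of_le_left le_sup_right
  have l6 : Pxy.toSubgraph ≤ K := le_sup_right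
  have hKa : a ∈ K.verts := l1.1 Pab.start_mem_verts_toSubgraph
  have hKb : b ∈ K.verts := l1.1 Pab.end_mem_verts_toSubgraph
  have hKx : x ∈ K.verts := l6.1 Pxy.start_mem_verts_toSubgraph
  have hKy : y ∈ K.verts := l6.1 Pxy.end_mem_verts_toSubgraph
  let f : Fin 4 → K.verts := fun i =>
    match i with
    | ⟨0, _⟩ => ⟨a, hKa⟩
    | ⟨1, _⟩ => ⟨b, hKb⟩
    | ⟨2, _⟩ => ⟨x, hKx⟩
    | ⟨3, _⟩ => ⟨y, hKy⟩
    | ⟨n + 4, h⟩ => absurd h (by omega)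
  let g : Fin 4 → V := fun i =>
    match i with
    | ⟨0, _⟩ => a
    | ⟨1, _⟩ => b
    | ⟨2, _⟩ => x
    | ⟨3, _⟩ => y
    | ⟨n + 4, h⟩ => absurd h (by omega)
  let sv : Fin 4 → Fin 4 → Set V := fun u v =>
    match u, v with
    | ⟨0, _⟩, ⟨1, _⟩ => {z | z ∈ Pab.support}
    | ⟨1, _⟩, ⟨0, _⟩ => {z | z ∈ Pab.support}
    | ⟨0, _⟩, ⟨2, _⟩ => {z | z ∈ Pax.support}
    | ⟨2, _⟩, ⟨0, _⟩ => {z | z ∈ Pax.support}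
    | ⟨0, _⟩, ⟨3, _⟩ => {z | z ∈ Pay.support}
    | ⟨3, _⟩, ⟨0, _⟩ => {z | z ∈ Pay.support}
    | ⟨2, _⟩, ⟨1, _⟩ => {z | z ∈ Pxb.support}
    | ⟨1, _⟩, ⟨2, _⟩ => {z | z ∈ Pxb.support}
    | ⟨3, _⟩, ⟨1, _⟩ => {z | z ∈ Pyb.support}
    | ⟨1, _⟩, ⟨3, _⟩ => {z | z ∈ Pyb.support}
    | ⟨2, _⟩, ⟨3, _⟩ => {z | z ∈ Pxy.support}
    | ⟨3, _⟩, ⟨2, _⟩ => {z | z ∈ Pxy.support}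
    | ⟨0, _⟩, ⟨0, _⟩ => ∅
    | ⟨1, _⟩, ⟨1, _⟩ => ∅
    | ⟨2, _⟩, ⟨2, _⟩ => ∅
    | ⟨3, _⟩, ⟨3, _⟩ => ∅
    | ⟨n + 4, h⟩, _ => absurd h (by omega)
    | _, ⟨n + 4, h⟩ => absurd h (by omega)
  let wk : ∀ u v : Fin 4, (⊤ : SimpleGraph (Fin 4)).Adj u v → K.coe.Walk (f u) (f v) :=
    fun u v h =>
    match u, v, h with
    | ⟨0, _⟩, ⟨1, _⟩, _ => liftWalkLe Pab l1
    | ⟨1, _⟩, ⟨0, _⟩, _ => (liftWalkLe Pab l1).reverse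
    | ⟨0, _⟩, ⟨2, _⟩, _ => liftWalkLe Pax l2
    | ⟨2, _⟩, ⟨0, _⟩, _ => (liftWalkLe Pax l2).reverse
    | ⟨0, _⟩, ⟨3, _⟩, _ => liftWalkLe Pay l3
    | ⟨3, _⟩, ⟨0, _⟩, _ => (liftWalkLe Pay l3).reverse
    | ⟨2, _⟩, ⟨1, _⟩, _ => liftWalkLe Pxb l4
    | ⟨1, _⟩, ⟨2, _⟩, _ => (liftWalkLe Pxb l4).reverse
    | ⟨3, _⟩, ⟨1, _⟩, _ => liftWalkLe Pyb l5
    | ⟨1, _⟩, ⟨3, _⟩, _ => (liftWalkLe Pyb l5).reverse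
    | ⟨2, _⟩, ⟨3, _⟩, _ => liftWalkLe Pxy l6
    | ⟨3, _⟩, ⟨2, _⟩, _ => (liftWalkLe Pxy l6).reverse
    | ⟨0, _⟩, ⟨0, _⟩, h => absurd rfl h.ne
    | ⟨1, _⟩, ⟨1, _⟩, h => absurd rfl h.ne
    | ⟨2, _⟩, ⟨2, _⟩, h => absurd rfl h.ne
    | ⟨3, _⟩, ⟨3, _⟩, h => absurd rfl h.ne
    | ⟨n + 4, hn⟩, _, _ => absurd hn (by omega)
    | _, ⟨n + 4, hn⟩, _ => absurd hn (by omega)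
  have hsupp : ∀ (u v : Fin 4) (h : (⊤ : SimpleGraph (Fin 4)).Adj u v) (w : K.verts),
      w ∈ (wk u v h).support → (w : V) ∈ sv u v := by
    intro u v h w hw
    fin_cases u <;> fin_cases v <;>
      first
      | exact absurd rfl h.ne
      | exact mem_liftWalk_support.mp hw
      | exact mem_liftWalk_support.mp (mem_support_reverse'.mp hw)
  have hmain : ∀ (u v p q : Fin 4), s(u, v) ≠ s(p, q) → ∀ z : V,
      z ∈ sv u v → z ∈ sv p q → z = a ∨ z = b ∨ z = x ∨ z = y := by
    intro u v p q hne z hz₁ hz₂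
    fin_cases u <;> fin_cases v <;> fin_cases p <;> fin_cases q
    · exact absurd hz₁ (Set.notMem_empty z)
    · exact absurd hz₁ (Set.notMem_empty z)
    · exact absurd hz₁ (Set.notMem_empty z)
    · exact absurd hz₁ (Set.notMem_empty z)
    · exact absurd hz₁ (Set.notMem_empty z)
    · exact absurd hz₁ (Set.notMem_empty z)
    · exact absurd hz₁ (Set.notMem_empty z)
    · exact absurd hz₁ (Set.notMem_empty z)
    · exact absurd hz₁ (Set.notMem_empty z)
    · exact absurd hz₁ (Set.notMem_empty z)
    · exact absurd hz₁ (Set.notMem_empty z)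
    · exact absurd hz₁ (Set.notMem_empty z)
    · exact absurd hz₁ (Set.notMem_empty z)
    · exact absurd hz₁ (Set.notMem_empty z)
    · exact absurd hz₁ (Set.notMem_empty z)
    · exact absurd hz₁ (Set.notMem_empty z)
    · exact absurd hz₂ (Set.notMem_empty z)
    · exact absurd rfl hne
    · exact Or.inl (i1 z hz₁ hz₂)
    · exact Or.inl (i2 z hz₁ hz₂)
    · exact absurd Sym2.eq_swap hne
    · exact absurd hz₂ (Set.notMem_empty z)
    · exact Or.inr (Or.inl (i3 z hz₁ hz₂))
    · exact Or.inr (Or.inl (i4 z hz₁ hz₂))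
    · exact Or.inl (i1 z hz₁ hz₂)
    · exact Or.inr (Or.inl (i3 z hz₁ hz₂))
    · exact absurd hz₂ (Set.notMem_empty z)
    · exact absurd hz₂ (i5 z hz₁)
    · exact Or.inl (i2 z hz₁ hz₂)
    · exact Or.inr (Or.inl (i4 z hz₁ hz₂))
    · exact absurd hz₂ (i5 z hz₁)
    · exact absurd hz₂ (Set.notMem_empty z)
    · exact absurd hz₂ (Set.notMem_empty z)
    · exact Or.inl (i1 z hz₂ hz₁)
    · exact absurd rfl hne
    · exact Or.inl (i6 z hz₁ hz₂)
    · exact Or.inl (i1 z hz₂ hz₁)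
    · exact absurd hz₂ (Set.notMem_empty z)
    · exact Or.inr (Or.inr (Or.inl (i7 z hz₁ hz₂)))
    · exact absurd hz₂ (i8 z hz₁)
    · exact absurd Sym2.eq_swap hne
    · exact Or.inr (Or.inr (Or.inl (i7 z hz₁ hz₂)))
    · exact absurd hz₂ (Set.notMem_empty z)
    · exact Or.inr (Or.inr (Or.inl (i9 z hz₁ hz₂)))
    · exact Or.inl (i6 z hz₁ hz₂)
    · exact absurd hz₂ (i8 z hz₁)
    · exact Or.inr (Or.inr (Or.inl (i9 z hz₁ hz₂)))
    · exact absurd hz₂ (Set.notMem_empty z)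
    · exact absurd hz₂ (Set.notMem_empty z)
    · exact Or.inl (i2 z hz₂ hz₁)
    · exact Or.inl (i6 z hz₂ hz₁)
    · exact absurd rfl hne
    · exact Or.inl (i2 z hz₂ hz₁)
    · exact absurd hz₂ (Set.notMem_empty z)
    · exact absurd hz₂ (i10 z hz₁)
    · exact Or.inr (Or.inr (Or.inr (i11 z hz₁ hz₂)))
    · exact Or.inl (i6 z hz₂ hz₁)
    · exact absurd hz₂ (i10 z hz₁)
    · exact absurd hz₂ (Set.notMem_empty z)
    · exact Or.inr (Or.inr (Or.inr (i12 z hz₁ hz₂)))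
    · exact absurd Sym2.eq_swap hne
    · exact Or.inr (Or.inr (Or.inr (i11 z hz₁ hz₂)))
    · exact Or.inr (Or.inr (Or.inr (i12 z hz₁ hz₂)))
    · exact absurd hz₂ (Set.notMem_empty z)
    · exact absurd hz₂ (Set.notMem_empty z)
    · exact absurd Sym2.eq_swap hne
    · exact Or.inl (i1 z hz₁ hz₂)
    · exact Or.inl (i2 z hz₁ hz₂)
    · exact absurd rfl hne
    · exact absurd hz₂ (Set.notMem_empty z)
    · exact Or.inr (Or.inl (i3 z hz₁ hz₂))
    · exact Or.inr (Or.inl (i4 z hz₁ hz₂))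
    · exact Or.inl (i1 z hz₁ hz₂)
    · exact Or.inr (Or.inl (i3 z hz₁ hz₂))
    · exact absurd hz₂ (Set.notMem_empty z)
    · exact absurd hz₂ (i5 z hz₁)
    · exact Or.inl (i2 z hz₁ hz₂)
    · exact Or.inr (Or.inl (i4 z hz₁ hz₂))
    · exact absurd hz₂ (i5 z hz₁)
    · exact absurd hz₂ (Set.notMem_empty z)
    · exact absurd hz₁ (Set.notMem_empty z)
    · exact absurd hz₁ (Set.notMem_empty z)
    · exact absurd hz₁ (Set.notMem_empty z)
    · exact absurd hz₁ (Set.notMem_empty z)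
    · exact absurd hz₁ (Set.notMem_empty z)
    · exact absurd hz₁ (Set.notMem_empty z)
    · exact absurd hz₁ (Set.notMem_empty z)
    · exact absurd hz₁ (Set.notMem_empty z)
    · exact absurd hz₁ (Set.notMem_empty z)
    · exact absurd hz₁ (Set.notMem_empty z)
    · exact absurd hz₁ (Set.notMem_empty z)
    · exact absurd hz₁ (Set.notMem_empty z)
    · exact absurd hz₁ (Set.notMem_empty z)
    · exact absurd hz₁ (Set.notMem_empty z)
    · exact absurd hz₁ (Set.notMem_empty z)
    · exact absurd hz₁ (Set.notMem_empty z)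
    · exact absurd hz₂ (Set.notMem_empty z)
    · exact Or.inr (Or.inl (i3 z hz₂ hz₁))
    · exact Or.inr (Or.inr (Or.inl (i7 z hz₂ hz₁)))
    · exact absurd hz₁ (i10 z hz₂)
    · exact Or.inr (Or.inl (i3 z hz₂ hz₁))
    · exact absurd hz₂ (Set.notMem_empty z)
    · exact absurd rfl hne
    · exact Or.inr (Or.inl (i13 z hz₁ hz₂))
    · exact Or.inr (Or.inr (Or.inl (i7 z hz₂ hz₁)))
    · exact absurd Sym2.eq_swap hne
    · exact absurd hz₂ (Set.notMem_empty z)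
    · exact Or.inr (Or.inr (Or.inl (i14 z hz₁ hz₂)))
    · exact absurd hz₁ (i10 z hz₂)
    · exact Or.inr (Or.inl (i13 z hz₁ hz₂))
    · exact Or.inr (Or.inr (Or.inl (i14 z hz₁ hz₂)))
    · exact absurd hz₂ (Set.notMem_empty z)
    · exact absurd hz₂ (Set.notMem_empty z)
    · exact Or.inr (Or.inl (i4 z hz₂ hz₁))
    · exact absurd hz₁ (i8 z hz₂)
    · exact Or.inr (Or.inr (Or.inr (i11 z hz₂ hz₁)))
    · exact Or.inr (Or.inl (i4 z hz₂ hz₁))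
    · exact absurd hz₂ (Set.notMem_empty z)
    · exact Or.inr (Or.inl (i13 z hz₂ hz₁))
    · exact absurd rfl hne
    · exact absurd hz₁ (i8 z hz₂)
    · exact Or.inr (Or.inl (i13 z hz₂ hz₁))
    · exact absurd hz₂ (Set.notMem_empty z)
    · exact Or.inr (Or.inr (Or.inr (i15 z hz₁ hz₂)))
    · exact Or.inr (Or.inr (Or.inr (i11 z hz₂ hz₁)))
    · exact absurd Sym2.eq_swap hne
    · exact Or.inr (Or.inr (Or.inr (i15 z hz₁ hz₂)))
    · exact absurd hz₂ (Set.notMem_empty z)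
    · exact absurd hz₂ (Set.notMem_empty z)
    · exact Or.inl (i1 z hz₂ hz₁)
    · exact absurd Sym2.eq_swap hne
    · exact Or.inl (i6 z hz₁ hz₂)
    · exact Or.inl (i1 z hz₂ hz₁)
    · exact absurd hz₂ (Set.notMem_empty z)
    · exact Or.inr (Or.inr (Or.inl (i7 z hz₁ hz₂)))
    · exact absurd hz₂ (i8 z hz₁)
    · exact absurd rfl hne
    · exact Or.inr (Or.inr (Or.inl (i7 z hz₁ hz₂)))
    · exact absurd hz₂ (Set.notMem_empty z)
    · exact Or.inr (Or.inr (Or.inl (i9 z hz₁ hz₂)))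
    · exact Or.inl (i6 z hz₁ hz₂)
    · exact absurd hz₂ (i8 z hz₁)
    · exact Or.inr (Or.inr (Or.inl (i9 z hz₁ hz₂)))
    · exact absurd hz₂ (Set.notMem_empty z)
    · exact absurd hz₂ (Set.notMem_empty z)
    · exact Or.inr (Or.inl (i3 z hz₂ hz₁))
    · exact Or.inr (Or.inr (Or.inl (i7 z hz₂ hz₁)))
    · exact absurd hz₁ (i10 z hz₂)
    · exact Or.inr (Or.inl (i3 z hz₂ hz₁))
    · exact absurd hz₂ (Set.notMem_empty z)
    · exact absurd Sym2.eq_swap hne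
    · exact Or.inr (Or.inl (i13 z hz₁ hz₂))
    · exact Or.inr (Or.inr (Or.inl (i7 z hz₂ hz₁)))
    · exact absurd rfl hne
    · exact absurd hz₂ (Set.notMem_empty z)
    · exact Or.inr (Or.inr (Or.inl (i14 z hz₁ hz₂)))
    · exact absurd hz₁ (i10 z hz₂)
    · exact Or.inr (Or.inl (i13 z hz₁ hz₂))
    · exact Or.inr (Or.inr (Or.inl (i14 z hz₁ hz₂)))
    · exact absurd hz₂ (Set.notMem_empty z)
    · exact absurd hz₁ (Set.notMem_empty z)
    · exact absurd hz₁ (Set.notMem_empty z)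
    · exact absurd hz₁ (Set.notMem_empty z)
    · exact absurd hz₁ (Set.notMem_empty z)
    · exact absurd hz₁ (Set.notMem_empty z)
    · exact absurd hz₁ (Set.notMem_empty z)
    · exact absurd hz₁ (Set.notMem_empty z)
    · exact absurd hz₁ (Set.notMem_empty z)
    · exact absurd hz₁ (Set.notMem_empty z)
    · exact absurd hz₁ (Set.notMem_empty z)
    · exact absurd hz₁ (Set.notMem_empty z)
    · exact absurd hz₁ (Set.notMem_empty z)
    · exact absurd hz₁ (Set.notMem_empty z)
    · exact absurd hz₁ (Set.notMem_empty z)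
    · exact absurd hz₁ (Set.notMem_empty z)
    · exact absurd hz₁ (Set.notMem_empty z)
    · exact absurd hz₂ (Set.notMem_empty z)
    · exact absurd hz₁ (i5 z hz₂)
    · exact Or.inr (Or.inr (Or.inl (i9 z hz₂ hz₁)))
    · exact Or.inr (Or.inr (Or.inr (i12 z hz₂ hz₁)))
    · exact absurd hz₁ (i5 z hz₂)
    · exact absurd hz₂ (Set.notMem_empty z)
    · exact Or.inr (Or.inr (Or.inl (i14 z hz₂ hz₁)))
    · exact Or.inr (Or.inr (Or.inr (i15 z hz₂ hz₁)))
    · exact Or.inr (Or.inr (Or.inl (i9 z hz₂ hz₁)))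
    · exact Or.inr (Or.inr (Or.inl (i14 z hz₂ hz₁)))
    · exact absurd hz₂ (Set.notMem_empty z)
    · exact absurd rfl hne
    · exact Or.inr (Or.inr (Or.inr (i12 z hz₂ hz₁)))
    · exact Or.inr (Or.inr (Or.inr (i15 z hz₂ hz₁)))
    · exact absurd Sym2.eq_swap hne
    · exact absurd hz₂ (Set.notMem_empty z)
    · exact absurd hz₂ (Set.notMem_empty z)
    · exact Or.inl (i2 z hz₂ hz₁)
    · exact Or.inl (i6 z hz₂ hz₁)
    · exact absurd Sym2.eq_swap hne
    · exact Or.inl (i2 z hz₂ hz₁)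
    · exact absurd hz₂ (Set.notMem_empty z)
    · exact absurd hz₂ (i10 z hz₁)
    · exact Or.inr (Or.inr (Or.inr (i11 z hz₁ hz₂)))
    · exact Or.inl (i6 z hz₂ hz₁)
    · exact absurd hz₂ (i10 z hz₁)
    · exact absurd hz₂ (Set.notMem_empty z)
    · exact Or.inr (Or.inr (Or.inr (i12 z hz₁ hz₂)))
    · exact absurd rfl hne
    · exact Or.inr (Or.inr (Or.inr (i11 z hz₁ hz₂)))
    · exact Or.inr (Or.inr (Or.inr (i12 z hz₁ hz₂)))
    · exact absurd hz₂ (Set.notMem_empty z)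
    · exact absurd hz₂ (Set.notMem_empty z)
    · exact Or.inr (Or.inl (i4 z hz₂ hz₁))
    · exact absurd hz₁ (i8 z hz₂)
    · exact Or.inr (Or.inr (Or.inr (i11 z hz₂ hz₁)))
    · exact Or.inr (Or.inl (i4 z hz₂ hz₁))
    · exact absurd hz₂ (Set.notMem_empty z)
    · exact Or.inr (Or.inl (i13 z hz₂ hz₁))
    · exact absurd Sym2.eq_swap hne
    · exact absurd hz₁ (i8 z hz₂)
    · exact Or.inr (Or.inl (i13 z hz₂ hz₁))
    · exact absurd hz₂ (Set.notMem_empty z)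
    · exact Or.inr (Or.inr (Or.inr (i15 z hz₁ hz₂)))
    · exact Or.inr (Or.inr (Or.inr (i11 z hz₂ hz₁)))
    · exact absurd rfl hne
    · exact Or.inr (Or.inr (Or.inr (i15 z hz₁ hz₂)))
    · exact absurd hz₂ (Set.notMem_empty z)
    · exact absurd hz₂ (Set.notMem_empty z)
    · exact absurd hz₁ (i5 z hz₂)
    · exact Or.inr (Or.inr (Or.inl (i9 z hz₂ hz₁)))
    · exact Or.inr (Or.inr (Or.inr (i12 z hz₂ hz₁)))
    · exact absurd hz₁ (i5 z hz₂)
    · exact absurd hz₂ (Set.notMem_empty z)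
    · exact Or.inr (Or.inr (Or.inl (i14 z hz₂ hz₁)))
    · exact Or.inr (Or.inr (Or.inr (i15 z hz₂ hz₁)))
    · exact Or.inr (Or.inr (Or.inl (i9 z hz₂ hz₁)))
    · exact Or.inr (Or.inr (Or.inl (i14 z hz₂ hz₁)))
    · exact absurd hz₂ (Set.notMem_empty z)
    · exact absurd Sym2.eq_swap hne
    · exact Or.inr (Or.inr (Or.inr (i12 z hz₂ hz₁)))
    · exact Or.inr (Or.inr (Or.inr (i15 z hz₂ hz₁)))
    · exact absurd rfl hne
    · exact absurd hz₂ (Set.notMem_empty z)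
    · exact absurd hz₁ (Set.notMem_empty z)
    · exact absurd hz₁ (Set.notMem_empty z)
    · exact absurd hz₁ (Set.notMem_empty z)
    · exact absurd hz₁ (Set.notMem_empty z)
    · exact absurd hz₁ (Set.notMem_empty z)
    · exact absurd hz₁ (Set.notMem_empty z)
    · exact absurd hz₁ (Set.notMem_empty z)
    · exact absurd hz₁ (Set.notMem_empty z)
    · exact absurd hz₁ (Set.notMem_empty z)
    · exact absurd hz₁ (Set.notMem_empty z)
    · exact absurd hz₁ (Set.notMem_empty z)
    · exact absurd hz₁ (Set.notMem_empty z)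
    · exact absurd hz₁ (Set.notMem_empty z)
    · exact absurd hz₁ (Set.notMem_empty z)
    · exact absurd hz₁ (Set.notMem_empty z)
    · exact absurd hz₁ (Set.notMem_empty z)
  have hmaster2 : ∀ (u v : Fin 4) (z : V), z ∈ sv u v →
      (z = a ∨ z = b ∨ z = x ∨ z = y) → z = g u ∨ z = g v := by
    intro u v z hz₁ hz4
    fin_cases u <;> fin_cases v <;> rcases hz4 with rfl | rfl | rfl | rfl <;>
      first
      | exact absurd hz₁ (Set.notMem_empty _)
      | exact Or.inl rfl
      | exact Or.inr rfl
      | exact absurd hz₁ nab1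
      | exact absurd hz₁ nab2
      | exact absurd hz₁ nax1
      | exact absurd hz₁ nax2
      | exact absurd hz₁ nay1
      | exact absurd hz₁ nay2
      | exact absurd hz₁ nxb1
      | exact absurd hz₁ nxb2
      | exact absurd hz₁ nyb1
      | exact absurd hz₁ nyb2
      | exact absurd hz₁ nxy1
      | exact absurd hz₁ nxy2
  have hfg : ∀ i : Fin 4, ((f i : V)) = g i := by
    intro i
    fin_cases i <;> rfl
  have hrange : ∀ w : K.verts, ((w : V) = a ∨ (w : V) = b ∨ (w : V) = x ∨ (w : V) = y) →
      w ∈ Set.range f := by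
    intro w hw
    rcases hw with h | h | h | h
    · exact ⟨0, Subtype.ext h.symm⟩
    · exact ⟨1, Subtype.ext h.symm⟩
    · exact ⟨2, Subtype.ext h.symm⟩
    · exact ⟨3, Subtype.ext h.symm⟩
  have hrange_val : ∀ w : K.verts, w ∈ Set.range f →
      ((w : V) = a ∨ (w : V) = b ∨ (w : V) = x ∨ (w : V) = y) := by
    rintro w ⟨i, rfl⟩
    fin_cases i
    · exact Or.inl rfl
    · exact Or.inr (Or.inl rfl)
    · exact Or.inr (Or.inr (Or.inl rfl))
    · exact Or.inr (Or.inr (Or.inr rfl))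
  refine ⟨K, ⟨⟨f, ?_, fun {u v} h => wk u v h, ?_, ?_, ?_, ?_, ?_, ?_⟩⟩⟩
  · -- injectivity
    intro i j hij
    have := congrArg Subtype.val hij
    rw [hfg i, hfg j] at this
    fin_cases i <;> fin_cases j <;>
      first
      | rfl
      | exact absurd this hab
      | exact absurd this hax
      | exact absurd this hay
      | exact absurd this hab.symm
      | exact absurd this hbx.symm
      | exact absurd this hby.symm
      | exact absurd this hax.symm
      | exact absurd this hbx
      | exact absurd this hxy
      | exact absurd this hay.symm
      | exact absurd this hby
      | exact absurd this hxy.symm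
  · -- isPath
    intro u v h
    fin_cases u <;> fin_cases v <;>
      first
      | exact absurd rfl h.ne
      | exact liftWalk_isPath _ _ hPab
      | exact (liftWalk_isPath _ _ hPab).reverse
      | exact liftWalk_isPath _ _ hPax
      | exact (liftWalk_isPath _ _ hPax).reverse
      | exact liftWalk_isPath _ _ hPay
      | exact (liftWalk_isPath _ _ hPay).reverse
      | exact liftWalk_isPath _ _ hPxb
      | exact (liftWalk_isPath _ _ hPxb).reverse
      | exact liftWalk_isPath _ _ hPyb
      | exact (liftWalk_isPath _ _ hPyb).reverse
      | exact liftWalk_isPath _ _ hPxy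
      | exact (liftWalk_isPath _ _ hPxy).reverse
  · -- symm
    intro u v h
    fin_cases u <;> fin_cases v <;>
      first
      | exact absurd rfl h.ne
      | rfl
      | exact (SimpleGraph.Walk.reverse_reverse _).symm
  · -- disj
    intro u v p q h₁ h₂ hne w hw₁ hw₂
    exact hrange w (hmain u v p q hne (w : V) (hsupp u v h₁ w hw₁) (hsupp p q h₂ w hw₂))
  · -- branch
    intro u v h w hw hwr
    have h4 := hrange_val w hwr
    rcases hmaster2 u v (w : V) (hsupp u v h w hw) h4 with h' | h'
    · exact Or.inl (Subtype.ext (h'.trans (hfg u).symm))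
    · exact Or.inr (Subtype.ext (h'.trans (hfg v).symm))
  · -- cover_vert
    intro w
    right
    have hw : (w : V) ∈ (Pab.toSubgraph ⊔ Pax.toSubgraph ⊔ Pay.toSubgraph ⊔ Pxb.toSubgraph ⊔
        Pyb.toSubgraph ⊔ Pxy.toSubgraph).verts := w.2
    simp only [SimpleGraph.Subgraph.verts_sup, Set.mem_union,
      SimpleGraph.Walk.mem_verts_toSubgraph] at hw
    rcases hw with ((((h | h) | h) | h) | h) | h
    · exact ⟨0, 1, by decide, mem_liftWalk_support.mpr h⟩
    · exact ⟨0, 2, by decide, mem_liftWalk_support.mpr h⟩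
    · exact ⟨0, 3, by decide, mem_liftWalk_support.mpr h⟩
    · exact ⟨2, 1, by decide, mem_liftWalk_support.mpr h⟩
    · exact ⟨3, 1, by decide, mem_liftWalk_support.mpr h⟩
    · exact ⟨2, 3, by decide, mem_liftWalk_support.mpr h⟩
  · -- cover_edge
    intro e he
    revert he
    refine Sym2.ind (fun c d he => ?_) e
    have hadj : (Pab.toSubgraph ⊔ Pax.toSubgraph ⊔ Pay.toSubgraph ⊔ Pxb.toSubgraph ⊔
        Pyb.toSubgraph ⊔ Pxy.toSubgraph).Adj (c : V) (d : V) :=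
      (SimpleGraph.Subgraph.coe_adj _ _ _).mp ((SimpleGraph.mem_edgeSet _).mp he)
    simp only [SimpleGraph.Subgraph.sup_adj] at hadj
    rcases hadj with ((((h | h) | h) | h) | h) | h
    · exact ⟨0, 1, by decide, mem_liftWalk_edges
        (Pab.mem_edges_toSubgraph.mp (SimpleGraph.Subgraph.mem_edgeSet.mpr h))⟩
    · exact ⟨0, 2, by decide, mem_liftWalk_edges
        (Pax.mem_edges_toSubgraph.mp (SimpleGraph.Subgraph.mem_edgeSet.mpr h))⟩
    · exact ⟨0, 3, by decide, mem_liftWalk_edges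
        (Pay.mem_edges_toSubgraph.mp (SimpleGraph.Subgraph.mem_edgeSet.mpr h))⟩
    · exact ⟨2, 1, by decide, mem_liftWalk_edges
        (Pxb.mem_edges_toSubgraph.mp (SimpleGraph.Subgraph.mem_edgeSet.mpr h))⟩
    · exact ⟨3, 1, by decide, mem_liftWalk_edges
        (Pyb.mem_edges_toSubgraph.mp (SimpleGraph.Subgraph.mem_edgeSet.mpr h))⟩
    · exact ⟨2, 3, by decide, mem_liftWalk_edges
        (Pxy.mem_edges_toSubgraph.mp (SimpleGraph.Subgraph.mem_edgeSet.mpr h))⟩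

end InspectionAux

namespace InspectionAux

open SimpleGraph

variable {V : Type*} {G : SimpleGraph V}

/-- Homomorphism from the coercion of a subgraph of `H` into `H.spanningCoe`. -/
def sHom (H : G.Subgraph) (H' : G.Subgraph) (hle : H' ≤ H) : H'.coe →g H.spanningCoe where
  toFun := Subtype.val
  map_rel' := fun h => hle.2 h

lemma sHom_support {H H' : G.Subgraph} (hle : H' ≤ H) {p q : H'.verts}
    (w : H'.coe.Walk p q) : ∀ z ∈ (w.map (sHom H H' hle)).support, z ∈ H'.verts := by
  intro z hz
  rw [SimpleGraph.Walk.support_map] at hz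
  obtain ⟨z', _, rfl⟩ := List.mem_map.mp hz
  exact z'.2

/-- Homomorphism from an induced graph into the ambient graph. -/
def iHom (G : SimpleGraph V) (t : Set V) : (SimpleGraph.induce t G) →g G where
  toFun := Subtype.val
  map_rel' := fun h => h

lemma iHom_support {t : Set V} {p q : t} (w : (SimpleGraph.induce t G).Walk p q) :
    ∀ z ∈ (w.map (iHom G t)).support, z ∈ t := by
  intro z hz
  rw [SimpleGraph.Walk.support_map] at hz
  obtain ⟨z', _, rfl⟩ := List.mem_map.mp hz
  exact z'.2

lemma spanningHom_support {H : G.Subgraph} {p q : V} (w : H.spanningCoe.Walk p q) :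
    (w.map H.spanningHom).support = w.support := by
  rw [SimpleGraph.Walk.support_map]
  exact List.map_id _

lemma walk_decompose {Gs : SimpleGraph V} {u v : V} (w : Gs.Walk u v) (hne : u ≠ v) :
    ∃ (c : V) (h : Gs.Adj u c) (m : Gs.Walk c v), w = SimpleGraph.Walk.cons h m := by
  cases w with
  | nil => exact absurd rfl hne
  | cons h m => exact ⟨_, h, m, rfl⟩

lemma strip_walk {Gs : SimpleGraph V} {a b : V} (w : Gs.Walk a b) (hw : w.IsPath)
    (hnadj : ¬ Gs.Adj a b) (hab : a ≠ b) :
    ∃ (α β : V) (_ : Gs.Adj a α) (_ : Gs.Adj β b) (m : Gs.Walk α β),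
      (∀ z ∈ m.support, z ∈ w.support) ∧ a ∉ m.support ∧ b ∉ m.support := by
  obtain ⟨α, h₁, w₁, rfl⟩ := walk_decompose w hab
  have hw₁ : w₁.IsPath ∧ a ∉ w₁.support := by
    rw [SimpleGraph.Walk.cons_isPath_iff] at hw
    exact hw
  have hαb : b ≠ α := by
    rintro rfl
    exact hnadj h₁
  obtain ⟨β, h₂, m₂, hdec⟩ := walk_decompose w₁.reverse hαb
  have hrevPath : w₁.reverse.IsPath := hw₁.1.reverse
  rw [hdec] at hrevPath
  have hm₂ : m₂.IsPath ∧ b ∉ m₂.support := by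
    rw [SimpleGraph.Walk.cons_isPath_iff] at hrevPath
    exact hrevPath
  refine ⟨α, β, h₁, h₂.symm, m₂.reverse, ?_, ?_, ?_⟩
  · intro z hz
    have hz' : z ∈ m₂.support := by simpa [SimpleGraph.Walk.support_reverse] using hz
    have : z ∈ w₁.reverse.support := by
      rw [hdec]
      simp [hz']
    have : z ∈ w₁.support := by simpa [SimpleGraph.Walk.support_reverse] using this
    simp [this]
  · intro ha
    have hz' : a ∈ m₂.support := by simpa [SimpleGraph.Walk.support_reverse] using ha
    have : a ∈ w₁.reverse.support := by
      rw [hdec]; simp [hz']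
    exact hw₁.2 (by simpa [SimpleGraph.Walk.support_reverse] using this)
  · intro hb
    exact hm₂.2 (by simpa [SimpleGraph.Walk.support_reverse] using hb)

lemma takeUntil_dropUntil_inter [DecidableEq V] {Gs : SimpleGraph V} {u v x : V}
    {p : Gs.Walk u v} (hp : p.IsPath) (hx : x ∈ p.support) :
    ∀ z, z ∈ (p.takeUntil x hx).support → z ∈ (p.dropUntil x hx).support → z = x := by
  intro z h1 h2
  by_contra hne
  have hspec := p.take_spec hx
  have hnodup : ((p.takeUntil x hx).support ++ (p.dropUntil x hx).support.tail).Nodup := by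
    rw [← SimpleGraph.Walk.support_append, hspec]
    exact hp.support_nodup
  have hdisj := List.disjoint_of_nodup_append hnodup
  have h2' : z ∈ (p.dropUntil x hx).support.tail := by
    have : (p.dropUntil x hx).support = x :: (p.dropUntil x hx).support.tail :=
      SimpleGraph.Walk.support_eq_cons _
    rw [this] at h2
    rcases List.mem_cons.mp h2 with h' | h'
    · exact absurd h' hne
    · exact h'
  exact hdisj h1 h2'

end InspectionAux


namespace Inspection

/-- If `G` contains no subdivision of `K₄` as a subgraph, `H` is a connected
subgraph of `G` with distinct non-adjacent vertices `a`, `b` such that `H − {a,b}` is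
connected and there is a path from `a` to `b` in `G` minus the vertices of `H` other than
`a` and `b`, then some vertex of `H` separates `a` from `b` in `H`. -/
theorem exists_cut_vertex_separating {V : Type} [Fintype V] (G : SimpleGraph V)
    (hK4free : ¬ ∃ K : G.Subgraph, IsSubdivision (⊤ : SimpleGraph (Fin 4)) K.coe)
    (H : G.Subgraph) (hHconn : H.coe.Connected)
    (a b : V) (ha : a ∈ H.verts) (hb : b ∈ H.verts) (hab : a ≠ b)
    (hnadj : ¬ H.Adj a b)
    (hdel : ((H.deleteVerts {a, b}).coe).Connected)
    (hpath : ∃ (pa : a ∈ ((H.verts \ {a, b})ᶜ : Set V))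
        (pb : b ∈ ((H.verts \ {a, b})ᶜ : Set V)),
      (SimpleGraph.induce ((H.verts \ {a, b})ᶜ : Set V) G).Reachable ⟨a, pa⟩ ⟨b, pb⟩) :
    ∃ v, v ∈ H.verts ∧ v ≠ a ∧ v ≠ b ∧
      ∀ (pa : a ∈ (H.deleteVerts {v}).verts) (pb : b ∈ (H.deleteVerts {v}).verts),
        ¬ ((H.deleteVerts {v}).coe).Reachable ⟨a, pa⟩ ⟨b, pb⟩ := by
  classical
  by_contra hcon
  push_neg at hcon
  set s : Set V := H.verts \ {a, b} with hs
  set A : Set V := {x | x ∈ s ∧ H.Adj a x} with hA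
  set B : Set V := {x | x ∈ s ∧ H.Adj b x} with hB
  set Gs := H.spanningCoe with hGs
  have hnadjGs : ¬ Gs.Adj a b := hnadj
  have mkLink : ∀ (t : Set V) (w : Gs.Walk a b), w.IsPath →
      (∀ z ∈ w.support, z ∈ H.verts) →
      (∀ z ∈ w.support, z ≠ a → z ≠ b → z ∈ t) → InspectionAux.Link Gs t A B := by
    intro t w hw hH ht
    obtain ⟨α, β, hadjα, hadjβ, m, hsub, hnoA, hnoB⟩ :=
      InspectionAux.strip_walk w hw hnadjGs hab
    have hαm : α ∈ m.support := m.start_mem_support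
    have hβm : β ∈ m.support := m.end_mem_support
    have hmem : ∀ z ∈ m.support, z ∈ s := by
      intro z hz
      refine ⟨hH z (hsub z hz), ?_⟩
      intro hzz
      rcases hzz with rfl | rfl
      · exact hnoA hz
      · exact hnoB hz
    refine ⟨α, ⟨hmem α hαm, hadjα⟩, β, ⟨hmem β hβm, hadjβ.symm⟩, m, ?_⟩
    intro z hz
    exact ht z (hsub z hz) (fun h => hnoA (h ▸ hz)) (fun h => hnoB (h ▸ hz))
  have hABm : ∀ v ∈ s, InspectionAux.Link Gs (s \ {v}) A B := by
    intro v hv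
    have hvH : v ∈ H.verts := hv.1
    have hva : v ≠ a := fun h => hv.2 (by simp [h])
    have hvb : v ≠ b := fun h => hv.2 (by simp [h])
    obtain ⟨pa, pb, hr⟩ := hcon v hvH hva hvb
    obtain ⟨wc⟩ := hr
    set w0 : Gs.Walk a b := wc.map (InspectionAux.sHom H _ SimpleGraph.Subgraph.deleteVerts_le)
      with hw0
    have hsup : ∀ z ∈ w0.support, z ∈ H.verts \ {v} := by
      intro z hz
      have h' := InspectionAux.sHom_support SimpleGraph.Subgraph.deleteVerts_le wc z (hw0 ▸ hz)
      simpa using h'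
    refine mkLink _ w0.bypass w0.bypass_isPath ?_ ?_
    · intro z hz
      exact (hsup z (w0.support_bypass_subset hz)).1
    · intro z hz hza hzb
      have h' := hsup z (w0.support_bypass_subset hz)
      exact ⟨⟨h'.1, by simp [hza, hzb]⟩, by simpa using h'.2⟩
  have hLm : InspectionAux.Link Gs s A B := by
    obtain ⟨wc⟩ := hHconn.preconnected ⟨a, ha⟩ ⟨b, hb⟩
    set w0 : Gs.Walk a b := wc.map (InspectionAux.sHom H H le_rfl) with hw0
    have hsup : ∀ z ∈ w0.support, z ∈ H.verts := by
      intro z hz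
      exact InspectionAux.sHom_support le_rfl wc z (hw0 ▸ hz)
    refine mkLink _ w0.bypass w0.bypass_isPath ?_ ?_
    · intro z hz
      exact hsup z (w0.support_bypass_subset hz)
    · intro z hz hza hzb
      exact ⟨hsup z (w0.support_bypass_subset hz), by simp [hza, hzb]⟩
  obtain ⟨α₁, β₁, α₂, β₂, p₁, p₂, hα₁A, hβ₁B, hα₂A, hβ₂B, hp₁, hp₂, hp₁s, hp₂s, hdisj12⟩ :=
    InspectionAux.menger2 Gs s.ncard s A B (Set.toFinite s) le_rfl hABm hLm
  have hap₁ : a ∉ p₁.support := fun h => (hp₁s a h).2 (by simp)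
  have hbp₁ : b ∉ p₁.support := fun h => (hp₁s b h).2 (by simp)
  have hap₂ : a ∉ p₂.support := fun h => (hp₂s a h).2 (by simp)
  have hbp₂ : b ∉ p₂.support := fun h => (hp₂s b h).2 (by simp)
  have hα₁adj : Gs.Adj a α₁ := hα₁A.2
  have hβ₁adj : Gs.Adj β₁ b := hβ₁B.2.symm
  have hα₂adj : Gs.Adj a α₂ := hα₂A.2
  have hβ₂adj : Gs.Adj β₂ b := hβ₂B.2.symm
  set m₁ : Gs.Walk α₁ b := p₁.append (SimpleGraph.Walk.cons hβ₁adj SimpleGraph.Walk.nil)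
    with hm₁
  set Q₁ : Gs.Walk a b := SimpleGraph.Walk.cons hα₁adj m₁ with hQ₁
  set m₂ : Gs.Walk α₂ b := p₂.append (SimpleGraph.Walk.cons hβ₂adj SimpleGraph.Walk.nil)
    with hm₂
  set Q₂ : Gs.Walk a b := SimpleGraph.Walk.cons hα₂adj m₂ with hQ₂
  have hQ₁sup : ∀ z, z ∈ Q₁.support ↔ (z = a ∨ z ∈ p₁.support ∨ z = b) := by
    intro z
    rw [hQ₁]
    simp only [SimpleGraph.Walk.support_cons, List.mem_cons, hm₁,
      SimpleGraph.Walk.mem_support_append_iff, SimpleGraph.Walk.support_cons,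
      SimpleGraph.Walk.support_nil, List.mem_singleton]
    constructor
    · rintro (rfl | h | rfl | rfl | h0)
      · exact Or.inl rfl
      · exact Or.inr (Or.inl h)
      · exact Or.inr (Or.inl p₁.end_mem_support)
      · exact Or.inr (Or.inr rfl)
      · exact absurd h0 List.not_mem_nil
    · rintro (rfl | h | rfl)
      · exact Or.inl rfl
      · exact Or.inr (Or.inl h)
      · exact Or.inr (Or.inr (Or.inr (Or.inl rfl)))
  have hQ₂sup : ∀ z, z ∈ Q₂.support ↔ (z = a ∨ z ∈ p₂.support ∨ z = b) := by
    intro z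
    rw [hQ₂]
    simp only [SimpleGraph.Walk.support_cons, List.mem_cons, hm₂,
      SimpleGraph.Walk.mem_support_append_iff, SimpleGraph.Walk.support_cons,
      SimpleGraph.Walk.support_nil, List.mem_singleton]
    constructor
    · rintro (rfl | h | rfl | rfl | h0)
      · exact Or.inl rfl
      · exact Or.inr (Or.inl h)
      · exact Or.inr (Or.inl p₂.end_mem_support)
      · exact Or.inr (Or.inr rfl)
      · exact absurd h0 List.not_mem_nil
    · rintro (rfl | h | rfl)
      · exact Or.inl rfl
      · exact Or.inr (Or.inl h)
      · exact Or.inr (Or.inr (Or.inr (Or.inl rfl)))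
  have hm₁path : m₁.IsPath := by
    rw [hm₁, SimpleGraph.Walk.isPath_def, SimpleGraph.Walk.support_append]
    refine List.Nodup.append hp₁.support_nodup ?_ ?_
    · simp
    · intro zz hzz hzz'
      simp only [SimpleGraph.Walk.support_cons, SimpleGraph.Walk.support_nil, List.tail_cons,
        List.mem_singleton] at hzz'
      exact hbp₁ (hzz' ▸ hzz)
  have hm₂path : m₂.IsPath := by
    rw [hm₂, SimpleGraph.Walk.isPath_def, SimpleGraph.Walk.support_append]
    refine List.Nodup.append hp₂.support_nodup ?_ ?_
    · simp
    · intro zz hzz hzz'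
      simp only [SimpleGraph.Walk.support_cons, SimpleGraph.Walk.support_nil, List.tail_cons,
        List.mem_singleton] at hzz'
      exact hbp₂ (hzz' ▸ hzz)
  have hQ₁path : Q₁.IsPath := by
    rw [hQ₁, SimpleGraph.Walk.cons_isPath_iff]
    refine ⟨hm₁path, ?_⟩
    intro hmem
    rw [hm₁, SimpleGraph.Walk.mem_support_append_iff] at hmem
    rcases hmem with h | h
    · exact hap₁ h
    · simp only [SimpleGraph.Walk.support_cons, SimpleGraph.Walk.support_nil,
        List.mem_cons, List.mem_singleton] at h
      rcases h with rfl | rfl | h0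
      · exact hap₁ p₁.end_mem_support
      · exact hab rfl
      · exact absurd h0 List.not_mem_nil
  have hQ₂path : Q₂.IsPath := by
    rw [hQ₂, SimpleGraph.Walk.cons_isPath_iff]
    refine ⟨hm₂path, ?_⟩
    intro hmem
    rw [hm₂, SimpleGraph.Walk.mem_support_append_iff] at hmem
    rcases hmem with h | h
    · exact hap₂ h
    · simp only [SimpleGraph.Walk.support_cons, SimpleGraph.Walk.support_nil,
        List.mem_cons, List.mem_singleton] at h
      rcases h with rfl | rfl | h0
      · exact hap₂ p₂.end_mem_support
      · exact hab rfl
      · exact absurd h0 List.not_mem_nil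
  -- connector between the two path interiors through H - {a,b}
  have hx0s : α₁ ∈ s := hα₁A.1
  have hy0s : α₂ ∈ s := hα₂A.1
  have hx0d : α₁ ∈ (H.deleteVerts {a, b}).verts := by
    rw [SimpleGraph.Subgraph.deleteVerts_verts]
    exact hx0s
  have hy0d : α₂ ∈ (H.deleteVerts {a, b}).verts := by
    rw [SimpleGraph.Subgraph.deleteVerts_verts]
    exact hy0s
  obtain ⟨wcd⟩ := hdel.preconnected ⟨α₁, hx0d⟩ ⟨α₂, hy0d⟩
  set ω : Gs.Walk α₁ α₂ := wcd.map (InspectionAux.sHom H _ SimpleGraph.Subgraph.deleteVerts_le)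
    with hω
  have hωs : ∀ z ∈ ω.support, z ∈ s := by
    intro z hz
    have h' := InspectionAux.sHom_support SimpleGraph.Subgraph.deleteVerts_le wcd z (hω ▸ hz)
    rw [SimpleGraph.Subgraph.deleteVerts_verts] at h'
    exact h'
  obtain ⟨y', hy'p₂, ω₁, hω₁sub, hω₁min⟩ :=
    InspectionAux.exists_prefix_to ω {z | z ∈ p₂.support} ⟨α₂, p₂.start_mem_support,
      ω.end_mem_support⟩
  obtain ⟨x', hx'p₁, ω₂, hω₂sub, hω₂min⟩ :=
    InspectionAux.exists_suffix_from ω₁ {z | z ∈ p₁.support} ⟨α₁, p₁.start_mem_support,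
      ω₁.start_mem_support⟩
  set R : Gs.Walk x' y' := ω₂.bypass with hR
  have hRpath : R.IsPath := ω₂.bypass_isPath
  have hRsub : ∀ z ∈ R.support, z ∈ ω₂.support := fun z hz =>
    ω₂.support_bypass_subset (hR ▸ hz)
  have hRs : ∀ z ∈ R.support, z ∈ s := fun z hz =>
    hωs z (hω₁sub _ (hω₂sub _ (hRsub z hz)))
  have hRp₁ : ∀ z ∈ R.support, z ∈ p₁.support → z = x' := fun z hz h =>
    hω₂min z (hRsub z hz) h
  have hRp₂ : ∀ z ∈ R.support, z ∈ p₂.support → z = y' := fun z hz h =>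
    hω₁min z (hω₂sub _ (hRsub z hz)) h
  have hx'y' : x' ≠ y' := fun h => hdisj12 x' hx'p₁ (h ▸ hy'p₂)
  have hx's : x' ∈ s := hp₁s x' hx'p₁
  have hy's : y' ∈ s := hp₂s y' hy'p₂
  have hx'a : x' ≠ a := fun h => hx's.2 (by simp [h])
  have hx'b : x' ≠ b := fun h => hx's.2 (by simp [h])
  have hy'a : y' ≠ a := fun h => hy's.2 (by simp [h])
  have hy'b : y' ≠ b := fun h => hy's.2 (by simp [h])
  have haR : a ∉ R.support := fun h => ((hRs a h).2 (by simp)).elim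
  have hbR : b ∉ R.support := fun h => (hRs b h).2 (by simp)
  -- arcs of Q₁ and Q₂
  have hx'Q₁ : x' ∈ Q₁.support := (hQ₁sup x').mpr (Or.inr (Or.inl hx'p₁))
  have hy'Q₂ : y' ∈ Q₂.support := (hQ₂sup y').mpr (Or.inr (Or.inl hy'p₂))
  set Wax : Gs.Walk a x' := Q₁.takeUntil x' hx'Q₁ with hWaxd
  set Wxb : Gs.Walk x' b := Q₁.dropUntil x' hx'Q₁ with hWxbd
  set Way : Gs.Walk a y' := Q₂.takeUntil y' hy'Q₂ with hWayd
  set Wyb : Gs.Walk y' b := Q₂.dropUntil y' hy'Q₂ with hWybd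
  have hWaxp : Wax.IsPath := hQ₁path.takeUntil hx'Q₁
  have hWxbp : Wxb.IsPath := hQ₁path.dropUntil hx'Q₁
  have hWayp : Way.IsPath := hQ₂path.takeUntil hy'Q₂
  have hWybp : Wyb.IsPath := hQ₂path.dropUntil hy'Q₂
  have hWaxQ : ∀ z ∈ Wax.support, z ∈ Q₁.support := fun z hz =>
    Q₁.support_takeUntil_subset hx'Q₁ (hWaxd ▸ hz)
  have hWxbQ : ∀ z ∈ Wxb.support, z ∈ Q₁.support := fun z hz =>
    Q₁.support_dropUntil_subset hx'Q₁ (hWxbd ▸ hz)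
  have hWayQ : ∀ z ∈ Way.support, z ∈ Q₂.support := fun z hz =>
    Q₂.support_takeUntil_subset hy'Q₂ (hWayd ▸ hz)
  have hWybQ : ∀ z ∈ Wyb.support, z ∈ Q₂.support := fun z hz =>
    Q₂.support_dropUntil_subset hy'Q₂ (hWybd ▸ hz)
  have hWaxWxb : ∀ z, z ∈ Wax.support → z ∈ Wxb.support → z = x' :=
    InspectionAux.takeUntil_dropUntil_inter hQ₁path hx'Q₁
  have hWayWyb : ∀ z, z ∈ Way.support → z ∈ Wyb.support → z = y' :=
    InspectionAux.takeUntil_dropUntil_inter hQ₂path hy'Q₂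
  have hbWax : b ∉ Wax.support := fun h => hx'b (hWaxWxb b h Wxb.end_mem_support).symm
  have haWxb : a ∉ Wxb.support := fun h => hx'a (hWaxWxb a Wax.start_mem_support h).symm
  have hbWay : b ∉ Way.support := fun h => hy'b (hWayWyb b h Wyb.end_mem_support).symm
  have haWyb : a ∉ Wyb.support := fun h => hy'a (hWayWyb a Way.start_mem_support h).symm
  -- external path
  obtain ⟨pa', pb', hre⟩ := hpath
  obtain ⟨wio⟩ := hre
  set tP : G.Walk a b := wio.map (InspectionAux.iHom G _) with htP
  have htPs : ∀ z ∈ tP.support, z ∈ (sᶜ : Set V) := fun z hz =>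
    InspectionAux.iHom_support wio z (htP ▸ hz)
  set Pw : G.Walk a b := tP.bypass with hPwd
  have hPwpath : Pw.IsPath := tP.bypass_isPath
  have hPws : ∀ z ∈ Pw.support, z ∉ s := by
    intro z hz hzs
    exact htPs z (tP.support_bypass_subset (hPwd ▸ hz)) hzs
  -- mapped walks into G
  set GPax : G.Walk a x' := Wax.map H.spanningHom with hGPaxd
  set GPxb : G.Walk x' b := Wxb.map H.spanningHom with hGPxbd
  set GPay : G.Walk a y' := Way.map H.spanningHom with hGPayd
  set GPyb : G.Walk y' b := Wyb.map H.spanningHom with hGPybd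
  set GR : G.Walk x' y' := R.map H.spanningHom with hGRd
  have hsupax : GPax.support = Wax.support := by
    rw [hGPaxd]; exact InspectionAux.spanningHom_support Wax
  have hsupxb : GPxb.support = Wxb.support := by
    rw [hGPxbd]; exact InspectionAux.spanningHom_support Wxb
  have hsupay : GPay.support = Way.support := by
    rw [hGPayd]; exact InspectionAux.spanningHom_support Way
  have hsupyb : GPyb.support = Wyb.support := by
    rw [hGPybd]; exact InspectionAux.spanningHom_support Wyb
  have hsupR : GR.support = R.support := by
    rw [hGRd]; exact InspectionAux.spanningHom_support R
  -- auxiliary membership facts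
  have hy'Q₁ : y' ∉ Q₁.support := by
    intro h
    rcases (hQ₁sup y').mp h with h' | h' | h'
    · exact hy'a h'
    · exact hdisj12 y' h' hy'p₂
    · exact hy'b h'
  have hx'Q₂ : x' ∉ Q₂.support := by
    intro h
    rcases (hQ₂sup x').mp h with h' | h' | h'
    · exact hx'a h'
    · exact hdisj12 x' hx'p₁ h'
    · exact hx'b h'
  have hQ₁H : ∀ z ∈ Q₁.support, z ∈ H.verts := by
    intro z h
    rcases (hQ₁sup z).mp h with rfl | h' | rfl
    · exact ha
    · exact (hp₁s z h').1
    · exact hb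
  have hQ₂H : ∀ z ∈ Q₂.support, z ∈ H.verts := by
    intro z h
    rcases (hQ₂sup z).mp h with rfl | h' | rfl
    · exact ha
    · exact (hp₂s z h').1
    · exact hb
  have hPQ : ∀ z ∈ Pw.support, z ∈ H.verts → z = a ∨ z = b := by
    intro z hz hH
    by_contra hcc
    push_neg at hcc
    refine hPws z hz ⟨hH, ?_⟩
    intro hmem
    rcases hmem with rfl | rfl
    · exact hcc.1 rfl
    · exact hcc.2 rfl
  have hQQ : ∀ z, z ∈ Q₁.support → z ∈ Q₂.support → z = a ∨ z = b := by
    intro z h1 h2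
    rcases (hQ₁sup z).mp h1 with rfl | h' | rfl
    · exact Or.inl rfl
    · rcases (hQ₂sup z).mp h2 with rfl | h'' | rfl
      · exact absurd h' hap₁
      · exact absurd h'' (hdisj12 z h')
      · exact absurd h' hbp₁
    · exact Or.inr rfl
  obtain ⟨K, hKK⟩ := InspectionAux.k4_of_six (G := G)
    (Ne.symm hx'a) (Ne.symm hy'a) (Ne.symm hx'b) (Ne.symm hy'b) hab hx'y'
    Pw GPax GPay GPxb GPyb GR
    hPwpath
    (SimpleGraph.Walk.map_isPath_of_injective SimpleGraph.Subgraph.spanningHom_injective hWaxp)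
    (SimpleGraph.Walk.map_isPath_of_injective SimpleGraph.Subgraph.spanningHom_injective hWayp)
    (SimpleGraph.Walk.map_isPath_of_injective SimpleGraph.Subgraph.spanningHom_injective hWxbp)
    (SimpleGraph.Walk.map_isPath_of_injective SimpleGraph.Subgraph.spanningHom_injective hWybp)
    (SimpleGraph.Walk.map_isPath_of_injective SimpleGraph.Subgraph.spanningHom_injective hRpath)
    (fun h => hPws x' h hx's)
    (fun h => hPws y' h hy's)
    (by rw [hsupax]; exact hbWax)
    (by rw [hsupax]; exact fun h => hy'Q₁ (hWaxQ y' h))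
    (by rw [hsupay]; exact hbWay)
    (by rw [hsupay]; exact fun h => hx'Q₂ (hWayQ x' h))
    (by rw [hsupxb]; exact haWxb)
    (by rw [hsupxb]; exact fun h => hy'Q₁ (hWxbQ y' h))
    (by rw [hsupyb]; exact haWyb)
    (by rw [hsupyb]; exact fun h => hx'Q₂ (hWybQ x' h))
    (by rw [hsupR]; exact haR)
    (by rw [hsupR]; exact hbR)
    (by -- i1
      rw [hsupax]
      intro z hz hz2
      rcases hPQ z hz (hQ₁H z (hWaxQ z hz2)) with rfl | rfl
      · rfl
      · exact absurd hz2 hbWax)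
    (by -- i2
      rw [hsupay]
      intro z hz hz2
      rcases hPQ z hz (hQ₂H z (hWayQ z hz2)) with rfl | rfl
      · rfl
      · exact absurd hz2 hbWay)
    (by -- i3
      rw [hsupxb]
      intro z hz hz2
      rcases hPQ z hz (hQ₁H z (hWxbQ z hz2)) with rfl | rfl
      · exact absurd hz2 haWxb
      · rfl)
    (by -- i4
      rw [hsupyb]
      intro z hz hz2
      rcases hPQ z hz (hQ₂H z (hWybQ z hz2)) with rfl | rfl
      · exact absurd hz2 haWyb
      · rfl)
    (by -- i5
      rw [hsupR]
      intro z hz hz2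
      exact hPws z hz (hRs z hz2))
    (by -- i6
      rw [hsupax, hsupay]
      intro z hz1 hz2
      rcases hQQ z (hWaxQ z hz1) (hWayQ z hz2) with rfl | rfl
      · rfl
      · exact absurd hz1 hbWax)
    (by -- i7
      rw [hsupax, hsupxb]
      exact hWaxWxb)
    (by -- i8
      rw [hsupax, hsupyb]
      intro z hz1 hz2
      rcases hQQ z (hWaxQ z hz1) (hWybQ z hz2) with rfl | rfl
      · exact haWyb hz2
      · exact hbWax hz1)
    (by -- i9
      rw [hsupax, hsupR]
      intro z hz1 hz2
      rcases (hQ₁sup z).mp (hWaxQ z hz1) with rfl | h' | rfl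
      · exact absurd hz2 haR
      · exact hRp₁ z hz2 h'
      · exact absurd hz1 hbWax)
    (by -- i10
      rw [hsupay, hsupxb]
      intro z hz1 hz2
      rcases hQQ z (hWxbQ z hz2) (hWayQ z hz1) with rfl | rfl
      · exact haWxb hz2
      · exact hbWay hz1)
    (by -- i11
      rw [hsupay, hsupyb]
      exact hWayWyb)
    (by -- i12
      rw [hsupay, hsupR]
      intro z hz1 hz2
      rcases (hQ₂sup z).mp (hWayQ z hz1) with rfl | h' | rfl
      · exact absurd hz2 haR
      · exact hRp₂ z hz2 h'
      · exact absurd hz1 hbWay)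
    (by -- i13
      rw [hsupxb, hsupyb]
      intro z hz1 hz2
      rcases hQQ z (hWxbQ z hz1) (hWybQ z hz2) with rfl | rfl
      · exact absurd hz1 haWxb
      · rfl)
    (by -- i14
      rw [hsupxb, hsupR]
      intro z hz1 hz2
      rcases (hQ₁sup z).mp (hWxbQ z hz1) with rfl | h' | rfl
      · exact absurd hz1 haWxb
      · exact hRp₁ z hz2 h'
      · exact absurd hz2 hbR)
    (by -- i15
      rw [hsupyb, hsupR]
      intro z hz1 hz2
      rcases (hQ₂sup z).mp (hWybQ z hz1) with rfl | h' | rfl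
      · exact absurd hz1 haWyb
      · exact hRp₂ z hz2 h'
      · exact absurd hz2 hbR)
  exact hK4free ⟨K, hKK⟩

end Inspection
end
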